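/- arXiv:2310.04340 — 10 statements merged into one kernel-verified Lean document; each statement's English description precedes it below -/
import Mathlib

section
/- For every symmetric matrix Q ∈ S^n, ℓ_2(Q) = min{ min{ (Q_{ii}Q_{jj} − Q_{ij}²)/(Q_{ii} + Q_{jj} − 2Q_{ij}) : 1 ≤ i < j ≤ n, Q_{ij} < min{Q_{ii}, Q_{jj}} }, min_{1≤k≤n} Q_{kk} }, where the inner minimum is taken to be +∞ (i.e., is ignored) if no pair (i,j) satisfies Q_{ij} < min{Q_{ii}, Q_{jj}}. -/
open Matrix BigOperators

noncomputable section

def simplexF (n : ℕ) : Set (Fin n → ℝ) :=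
  {x | (∑ i, x i) = 1 ∧ ∀ i, 0 ≤ x i}

def sparsity {n : ℕ} (x : Fin n → ℝ) : ℕ :=
  Set.ncard {i | x i ≠ 0}

def sparseF (n ρ : ℕ) : Set (Fin n → ℝ) :=
  {x | x ∈ simplexF n ∧ sparsity x ≤ ρ}

def quadForm {n : ℕ} (Q : Matrix (Fin n) (Fin n) ℝ) (x : Fin n → ℝ) : ℝ :=
  x ⬝ᵥ Q.mulVec x

def ell {n : ℕ} (Q : Matrix (Fin n) (Fin n) ℝ) : ℝ :=
  sInf (quadForm Q '' simplexF n)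

def ellSparse {n : ℕ} (Q : Matrix (Fin n) (Fin n) ℝ) (ρ : ℕ) : ℝ :=
  sInf (quadForm Q '' sparseF n ρ)

def ip {n : ℕ} (Q X : Matrix (Fin n) (Fin n) ℝ) : ℝ :=
  ∑ i, ∑ j, Q i j * X i j

lemma sum_pair_support {n : ℕ} {i j : Fin n} (hij : i ≠ j) (f : Fin n → ℝ)
    (h : ∀ k, k ≠ i → k ≠ j → f k = 0) : ∑ k, f k = f i + f j := by
  rw [← Finset.sum_pair hij]
  refine (Finset.sum_subset (Finset.subset_univ _) ?_).symm
  intro k _ hk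
  simp only [Finset.mem_insert, Finset.mem_singleton, not_or] at hk
  exact h k hk.1 hk.2

lemma sum_single_support {n : ℕ} {i : Fin n} (f : Fin n → ℝ)
    (h : ∀ k, k ≠ i → f k = 0) : ∑ k, f k = f i :=
  Finset.sum_eq_single i (fun k _ hk => h k hk) (fun hi => absurd (Finset.mem_univ i) hi)

lemma quadForm_sum {n : ℕ} (Q : Matrix (Fin n) (Fin n) ℝ) (x : Fin n → ℝ) :
    quadForm Q x = ∑ a, x a * ∑ b, Q a b * x b := rfl

lemma quad_pair_supported {n : ℕ} (Q : Matrix (Fin n) (Fin n) ℝ) {i j : Fin n} (hij : i ≠ j)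
    (x : Fin n → ℝ) (h : ∀ k, k ≠ i → k ≠ j → x k = 0) :
    quadForm Q x = x i * Q i i * x i + x i * Q i j * x j + x j * Q j i * x i + x j * Q j j * x j := by
  have hrow : ∀ a, (∑ b, Q a b * x b) = Q a i * x i + Q a j * x j := fun a =>
    sum_pair_support hij _ (fun k h1 h2 => by rw [h k h1 h2, mul_zero])
  rw [quadForm_sum,
    sum_pair_support hij _ (fun k h1 h2 => by rw [h k h1 h2, zero_mul]),
    hrow, hrow]
  ring

lemma quad_single_supported {n : ℕ} (Q : Matrix (Fin n) (Fin n) ℝ) {i : Fin n}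
    (x : Fin n → ℝ) (h : ∀ k, k ≠ i → x k = 0) :
    quadForm Q x = x i * Q i i * x i := by
  have hrow : ∀ a, (∑ b, Q a b * x b) = Q a i * x i := fun a =>
    sum_single_support _ (fun k h1 => by rw [h k h1, mul_zero])
  rw [quadForm_sum, sum_single_support _ (fun k h1 => by rw [h k h1, zero_mul]), hrow]
  ring

theorem stmt1 {n : ℕ} (hn : 0 < n) (Q : Matrix (Fin n) (Fin n) ℝ) (hQ : Q.IsSymm) :
    ellSparse Q 2 =
      (if hT : (Finset.univ.filter fun p : Fin n × Fin n =>
            p.1 < p.2 ∧ Q p.1 p.2 < min (Q p.1 p.1) (Q p.2 p.2)).Nonempty then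
        min
          ((Finset.univ.filter fun p : Fin n × Fin n =>
              p.1 < p.2 ∧ Q p.1 p.2 < min (Q p.1 p.1) (Q p.2 p.2)).inf' hT fun p =>
            (Q p.1 p.1 * Q p.2 p.2 - Q p.1 p.2 ^ 2) /
              (Q p.1 p.1 + Q p.2 p.2 - 2 * Q p.1 p.2))
          (Finset.univ.inf' (Finset.univ_nonempty_iff.mpr ⟨⟨0, hn⟩⟩) fun k => Q k k)
      else (Finset.univ.inf' (Finset.univ_nonempty_iff.mpr ⟨⟨0, hn⟩⟩) fun k => Q k k)) := by
  classical
  have hsymm : ∀ i j, Q j i = Q i j := fun i j => hQ.apply i j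
  set T := (Finset.univ.filter fun p : Fin n × Fin n =>
      p.1 < p.2 ∧ Q p.1 p.2 < min (Q p.1 p.1) (Q p.2 p.2)) with hTdef
  set R := (if hT : T.Nonempty then
        min (T.inf' hT fun p =>
            (Q p.1 p.1 * Q p.2 p.2 - Q p.1 p.2 ^ 2) /
              (Q p.1 p.1 + Q p.2 p.2 - 2 * Q p.1 p.2))
          (Finset.univ.inf' (Finset.univ_nonempty_iff.mpr ⟨⟨0, hn⟩⟩) fun k => Q k k)
      else (Finset.univ.inf' (Finset.univ_nonempty_iff.mpr ⟨⟨0, hn⟩⟩) fun k => Q k k)) with hR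
  -- R is at most every diagonal entry
  have hdiag : ∀ k, R ≤ Q k k := by
    intro k
    rw [hR]
    split_ifs with h
    · exact le_trans (min_le_right _ _) (Finset.inf'_le _ (Finset.mem_univ k))
    · exact Finset.inf'_le _ (Finset.mem_univ k)
  -- R is at most the ratio value for every pair in T
  have hpair : ∀ p ∈ T, R ≤ (Q p.1 p.1 * Q p.2 p.2 - Q p.1 p.2 ^ 2) /
      (Q p.1 p.1 + Q p.2 p.2 - 2 * Q p.1 p.2) := by
    intro p hp
    rw [hR, dif_pos ⟨p, hp⟩]
    exact le_trans (min_le_left _ _) (Finset.inf'_le _ hp)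
  -- key lower bound on segments
  have key : ∀ i j : Fin n, i < j → ∀ t : ℝ, 0 ≤ t → t ≤ 1 →
      R ≤ t^2 * Q i i + 2*t*(1-t)*Q i j + (1-t)^2 * Q j j := by
    intro i j hij t ht ht1
    by_cases hc : Q i j < min (Q i i) (Q j j)
    · have hp : ((i, j) : Fin n × Fin n) ∈ T := by
        simp only [hTdef, Finset.mem_filter, Finset.mem_univ, true_and]
        exact ⟨hij, hc⟩
      refine (hpair _ hp).trans ?_
      simp only
      rcases lt_min_iff.mp hc with ⟨h1, h2⟩
      have hd : 0 < Q i i + Q j j - 2 * Q i j := by linarith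
      rw [div_le_iff₀ hd]
      nlinarith [sq_nonneg ((Q i i + Q j j - 2*Q i j)*t - (Q j j - Q i j))]
    · have hm : min (Q i i) (Q j j) ≤ Q i j := not_lt.mp hc
      have hR1 : R ≤ min (Q i i) (Q j j) := le_min (hdiag i) (hdiag j)
      refine hR1.trans ?_
      have h1 : min (Q i i) (Q j j) ≤ Q i i := min_le_left _ _
      have h2 : min (Q i i) (Q j j) ≤ Q j j := min_le_right _ _
      set m := min (Q i i) (Q j j)
      nlinarith [mul_nonneg (sq_nonneg t) (by linarith : (0:ℝ) ≤ Q i i - m),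
        mul_nonneg (sq_nonneg (1-t)) (by linarith : (0:ℝ) ≤ Q j j - m),
        mul_nonneg (mul_nonneg ht (by linarith : (0:ℝ) ≤ 1 - t))
          (by linarith : (0:ℝ) ≤ Q i j - m)]
  -- lower bound: R ≤ every value of the quadratic form on sparseF n 2
  have hlb : ∀ y ∈ quadForm Q '' sparseF n 2, R ≤ y := by
    rintro y ⟨x, ⟨⟨hsum, hpos⟩, hsp⟩, rfl⟩
    have hne : ∃ i, x i ≠ 0 := by
      by_contra h
      push_neg at h
      rw [Finset.sum_congr rfl (fun k _ => h k)] at hsum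
      simp at hsum
    obtain ⟨i, hi⟩ := hne
    by_cases hj : ∃ j, j ≠ i ∧ x j ≠ 0
    · obtain ⟨j, hji, hj⟩ := hj
      have hsupp : ∀ k, k ≠ i → k ≠ j → x k = 0 := by
        intro k hki hkj
        by_contra hk
        have hsub : ({i, j, k} : Set (Fin n)) ⊆ {m | x m ≠ 0} := by
          intro m hm
          rcases hm with rfl | rfl | rfl
          · exact hi
          · exact hj
          · exact hk
        have h3 : ({i, j, k} : Set (Fin n)).ncard = 3 := by
          rw [Set.ncard_insert_of_notMem (by simp [Ne.symm hji, Ne.symm hki]),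
            Set.ncard_insert_of_notMem (by simp [Ne.symm hkj]), Set.ncard_singleton]
        have hle := Set.ncard_le_ncard hsub (Set.toFinite _)
        rw [h3] at hle
        have : sparsity x = Set.ncard {m | x m ≠ 0} := rfl
        omega
      have hsum2 : x i + x j = 1 := by
        rw [← sum_pair_support (Ne.symm hji) x hsupp]
        exact hsum
      have hq : quadForm Q x =
          (x i)^2 * Q i i + 2*(x i)*(x j)*Q i j + (x j)^2 * Q j j := by
        rw [quad_pair_supported Q (Ne.symm hji) x hsupp, hsymm j i]
        ring
      rcases (Ne.symm hji).lt_or_gt with hlt | hlt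
      · have h' := key i j hlt (x i) (hpos i) (by linarith [hpos j])
        rw [hq]
        have e : x j = 1 - x i := by linarith
        rw [e]
        exact h'
      · have h' := key j i hlt (x j) (hpos j) (by linarith [hpos i])
        rw [hq]
        have e : x i = 1 - x j := by linarith
        rw [e, ← hsymm i j]
        exact h'.trans (le_of_eq (by ring))
    · push_neg at hj
      have hsupp : ∀ k, k ≠ i → x k = 0 := by
        intro k hk
        by_contra hxk
        exact hxk (hj k hk)
      have hxi : x i = 1 := by
        rw [← sum_single_support x hsupp]; exact hsum
      have hq : quadForm Q x = Q i i := by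
        rw [quad_single_supported Q x hsupp, hxi]; ring
      rw [hq]
      exact hdiag i
  -- constructions: membership of vertex points and pair points
  have hsing : ∀ k : Fin n, ∃ x ∈ sparseF n 2, quadForm Q x = Q k k := by
    intro k
    refine ⟨fun m => if m = k then (1:ℝ) else 0, ⟨⟨?_, ?_⟩, ?_⟩, ?_⟩
    · rw [sum_single_support _ (fun m hm => if_neg hm)]
      simp
    · intro m; dsimp only; split <;> norm_num
    · have hsub : {m | (if m = k then (1:ℝ) else 0) ≠ 0} ⊆ {k} := by
        intro m hm
        simp only [Set.mem_setOf_eq] at hm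
        by_contra h
        exact hm (if_neg h)
      calc sparsity (fun m => if m = k then (1:ℝ) else 0)
          ≤ ({k} : Set (Fin n)).ncard := Set.ncard_le_ncard hsub (Set.toFinite _)
        _ ≤ 2 := by rw [Set.ncard_singleton]; norm_num
    · rw [quad_single_supported Q _ (fun m hm => if_neg hm), if_pos rfl]
      ring
  have hpairpt : ∀ i j : Fin n, i < j → Q i j < min (Q i i) (Q j j) →
      ∃ x ∈ sparseF n 2, quadForm Q x =
        (Q i i * Q j j - Q i j ^ 2) / (Q i i + Q j j - 2 * Q i j) := by
    intro i j hij hc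
    rcases lt_min_iff.mp hc with ⟨h1, h2⟩
    have hd : (0:ℝ) < Q i i + Q j j - 2 * Q i j := by linarith
    set t := (Q j j - Q i j) / (Q i i + Q j j - 2 * Q i j) with htdef
    have ht : 0 ≤ t := div_nonneg (by linarith) (le_of_lt hd)
    have ht1 : t ≤ 1 := by
      rw [htdef, div_le_one hd]; linarith
    have hijne : i ≠ j := ne_of_lt hij
    set x : Fin n → ℝ := fun m => if m = i then t else if m = j then 1 - t else 0 with hxdef
    have hxi : x i = t := if_pos rfl
    have hxj : x j = 1 - t := by
      show (if j = i then t else if j = j then 1 - t else 0) = 1 - t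
      rw [if_neg (Ne.symm hijne), if_pos rfl]
    have hsupp : ∀ k, k ≠ i → k ≠ j → x k = 0 := by
      intro k hki hkj
      show (if k = i then t else if k = j then 1 - t else 0) = 0
      rw [if_neg hki, if_neg hkj]
    refine ⟨x, ⟨⟨?_, ?_⟩, ?_⟩, ?_⟩
    · rw [sum_pair_support hijne x hsupp, hxi, hxj]; ring
    · intro m
      rcases eq_or_ne m i with rfl | hmi
      · rw [hxi]; exact ht
      · rcases eq_or_ne m j with rfl | hmj
        · rw [hxj]; linarith
        · rw [hsupp m hmi hmj]
    · have hsub : {m | x m ≠ 0} ⊆ ({i, j} : Set (Fin n)) := by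
        intro m hm
        simp only [Set.mem_setOf_eq] at hm
        by_contra h
        simp only [Set.mem_insert_iff, Set.mem_singleton_iff, not_or] at h
        exact hm (hsupp m h.1 h.2)
      calc sparsity x ≤ ({i, j} : Set (Fin n)).ncard := Set.ncard_le_ncard hsub (Set.toFinite _)
        _ ≤ 2 := by
            refine le_trans (Set.ncard_insert_le _ _) ?_
            rw [Set.ncard_singleton]
    · rw [quad_pair_supported Q hijne x hsupp, hxi, hxj, hsymm i j, htdef]
      have hd' : Q i i + Q j j - 2 * Q i j ≠ 0 := ne_of_gt hd
      have hd'' : Q i i + Q j j - Q i j * 2 ≠ 0 := by rw [mul_comm]; exact hd'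
      field_simp
      ring
  -- existence of a point attaining R
  have hmem : ∃ x ∈ sparseF n 2, quadForm Q x = R := by
    obtain ⟨k, -, hDeq⟩ := Finset.exists_mem_eq_inf'
      (Finset.univ_nonempty_iff.mpr ⟨(⟨0, hn⟩ : Fin n)⟩) (fun k => Q k k)
    by_cases hT : T.Nonempty
    · obtain ⟨p, hp, hMeq⟩ := Finset.exists_mem_eq_inf' hT (fun p : Fin n × Fin n =>
        (Q p.1 p.1 * Q p.2 p.2 - Q p.1 p.2 ^ 2) / (Q p.1 p.1 + Q p.2 p.2 - 2 * Q p.1 p.2))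
      rw [hTdef, Finset.mem_filter] at hp
      obtain ⟨-, hplt, hpc⟩ := hp
      rw [hR, dif_pos hT]
      rcases le_total
        (T.inf' hT fun p : Fin n × Fin n =>
          (Q p.1 p.1 * Q p.2 p.2 - Q p.1 p.2 ^ 2) / (Q p.1 p.1 + Q p.2 p.2 - 2 * Q p.1 p.2))
        (Finset.univ.inf' (Finset.univ_nonempty_iff.mpr ⟨⟨0, hn⟩⟩) fun k => Q k k) with hle | hle
      · rw [min_eq_left hle, hMeq]
        exact hpairpt p.1 p.2 hplt hpc
      · rw [min_eq_right hle, hDeq]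
        exact hsing k
    · rw [hR, dif_neg hT, hDeq]
      exact hsing k
  -- conclude
  obtain ⟨x0, hx0, hval⟩ := hmem
  show sInf (quadForm Q '' sparseF n 2) = R
  refine le_antisymm ?_ ?_
  · rw [← hval]
    exact csInf_le ⟨R, fun y hy => hlb y hy⟩ (Set.mem_image_of_mem _ hx0)
  · exact le_csInf ⟨quadForm Q x0, Set.mem_image_of_mem _ hx0⟩ hlb

end
end

section
/- F^{R1}_1 = {(x,X) ∈ ℝ^n × S^n : eᵀx = 1, X = Diag(x), x ≥ 0}, where Diag(x) denotes the diagonal matrix with diagonal x. -/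
open Matrix BigOperators

noncomputable section

def R1Feasible {n : ℕ} (ρ : ℕ) (x u : Fin n → ℝ)
    (X U R : Matrix (Fin n) (Fin n) ℝ) : Prop :=
  X.IsSymm ∧ U.IsSymm ∧
  (∑ i, x i) = 1 ∧
  (∑ i, u i) = (ρ : ℝ) ∧
  (∀ i, x i ≤ u i) ∧
  (∀ i, 0 ≤ x i) ∧
  (∀ i, U i i = u i) ∧
  (∀ i, (∑ j, X i j) = x i) ∧
  (∀ j, (∑ i, R i j) = u j) ∧
  (∀ i, (∑ j, R i j) = (ρ : ℝ) * x i) ∧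
  (∀ i, (∑ j, U i j) = (ρ : ℝ) * u i) ∧
  (∀ i j, 0 ≤ X i j - R j i - R i j + U i j) ∧
  (∀ i j, X i j - R j i ≤ 0) ∧
  (∀ i j, R i j - U i j ≤ 0) ∧
  (∀ i j, 0 ≤ X i j) ∧ (∀ i j, 0 ≤ R i j) ∧ (∀ i j, 0 ≤ U i j)

def FR1proj (n ρ : ℕ) : Set ((Fin n → ℝ) × Matrix (Fin n) (Fin n) ℝ) :=
  {p | ∃ u U R, R1Feasible ρ p.1 u p.2 U R}

def FR1 (n : ℕ) : Set ((Fin n → ℝ) × Matrix (Fin n) (Fin n) ℝ) :=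
  {p | p.2.IsSymm ∧ (∑ i, p.1 i) = 1 ∧ (∀ i, (∑ j, p.2 i j) = p.1 i) ∧
    (∀ i, 0 ≤ p.1 i) ∧ (∀ i j, 0 ≤ p.2 i j)}

theorem stmt3 {n : ℕ} (hn : 0 < n) :
    FR1proj n 1 =
      {p : (Fin n → ℝ) × Matrix (Fin n) (Fin n) ℝ |
        (∑ i, p.1 i) = 1 ∧ p.2 = Matrix.diagonal p.1 ∧ ∀ i, 0 ≤ p.1 i} := by
  ext ⟨x, X⟩
  simp only [FR1proj, Set.mem_setOf_eq]
  constructor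
  · rintro ⟨u, U, R, hXs, hUs, hx1, hu1, hxu, hx0, hUd, hXr, hRc, hRr, hUr,
      h1, h2, h3, hX0, hR0, hU0⟩
    refine ⟨hx1, ?_, hx0⟩
    have hUoff : ∀ i j, i ≠ j → U i j = 0 := by
      intro i j hij
      have hrow := hUr i
      rw [← Finset.sum_erase_add _ _ (Finset.mem_univ i)] at hrow
      rw [hUd i] at hrow; push_cast at hrow; rw [one_mul] at hrow
      have hzero : ∑ k ∈ Finset.univ.erase i, U i k = 0 := by linarith
      have := (Finset.sum_eq_zero_iff_of_nonneg
        (fun k _ => hU0 i k)).mp hzero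
      exact this j (Finset.mem_erase.mpr ⟨hij.symm, Finset.mem_univ j⟩)
    have hRoff : ∀ i j, i ≠ j → R i j = 0 := by
      intro i j hij
      have := h3 i j
      have h0 := hR0 i j
      have hu := hUoff i j hij
      linarith
    have hXoff : ∀ i j, i ≠ j → X i j = 0 := by
      intro i j hij
      have := h2 i j
      have h0 := hX0 i j
      have hr := hRoff j i hij.symm
      linarith
    have hXd : ∀ i, X i i = x i := by
      intro i
      have hrow := hXr i
      rw [← Finset.sum_erase_add _ _ (Finset.mem_univ i)] at hrow
      have hzero : ∑ k ∈ Finset.univ.erase i, X i k = 0 :=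
        Finset.sum_eq_zero (fun k hk =>
          hXoff i k (Ne.symm (Finset.mem_erase.mp hk).1))
      linarith
    ext i j
    by_cases h : i = j
    · subst h; simp [Matrix.diagonal, hXd i]
    · simp [Matrix.diagonal, h, hXoff i j h]
  · rintro ⟨hx1, hXd, hx0⟩
    subst hXd
    refine ⟨x, Matrix.diagonal x, Matrix.diagonal x, ?_, ?_, hx1, by simpa using hx1,
      fun i => le_refl _, hx0, fun i => by simp,
      fun i => by simp [Matrix.diagonal_apply], fun j => by simp [Matrix.diagonal_apply],
      fun i => by simp [Matrix.diagonal_apply], fun i => by simp [Matrix.diagonal_apply],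
      ?_, ?_, ?_, ?_, ?_, ?_⟩
    · exact (Matrix.isSymm_diagonal x)
    · exact (Matrix.isSymm_diagonal x)
    · intro i j
      by_cases h : i = j
      · subst h; simp
      · simp [Matrix.diagonal_apply, h, Ne.symm h]
    · intro i j
      by_cases h : i = j
      · subst h; simp
      · simp [Matrix.diagonal_apply, h, Ne.symm h]
    · intro i j
      by_cases h : i = j
      · subst h; simp
      · simp [Matrix.diagonal_apply, h]
    · intro i j
      by_cases h : i = j
      · subst h; simp [hx0 i]
      · simp [Matrix.diagonal_apply, h]
    · intro i j
      by_cases h : i = j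
      · subst h; simp [hx0 i]
      · simp [Matrix.diagonal_apply, h]
    · intro i j
      by_cases h : i = j
      · subst h; simp [hx0 i]
      · simp [Matrix.diagonal_apply, h]

end
end

section
/- For each ρ ∈ {2,3,…,n}, F^{R1}_ρ = F^{R1}, i.e., the projection of the R1(ρ)-feasible set onto (x,X) equals the RLT feasible set of the unconstrained standard quadratic program. -/
open Matrix BigOperators

noncomputable section

namespace StmtFourAux

variable {n : ℕ}

/-- indicator of a finset, as a real function -/
def chiR (T : Finset (Fin n)) (k : Fin n) : ℝ := if k ∈ T then 1 else 0

/-- the vector `(e_i + e_j)/2` -/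
def xpR (i j k : Fin n) : ℝ :=
  ((if k = i then (1:ℝ) else 0) + (if k = j then 1 else 0)) / 2

/-- the matrix `(E_{ij} + E_{ji})/2` -/
def XpR (i j k l : Fin n) : ℝ :=
  ((if k = i ∧ l = j then (1:ℝ) else 0) + (if k = j ∧ l = i then 1 else 0)) / 2

lemma chiR_nonneg (T : Finset (Fin n)) (k : Fin n) : 0 ≤ chiR T k := by
  unfold chiR; split_ifs <;> norm_num

lemma xpR_nonneg (i j k : Fin n) : 0 ≤ xpR i j k := by
  unfold xpR; split_ifs <;> norm_num

lemma chiR_sq (T : Finset (Fin n)) (k : Fin n) : chiR T k * chiR T k = chiR T k := by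
  unfold chiR; split_ifs <;> norm_num

lemma sum_chiR (T : Finset (Fin n)) : (∑ k, chiR T k) = (T.card : ℝ) := by
  unfold chiR
  rw [Finset.sum_ite_mem, Finset.univ_inter, Finset.sum_const, nsmul_eq_mul, mul_one]

lemma sum_xpR (i j : Fin n) : (∑ k, xpR i j k) = 1 := by
  unfold xpR
  rw [← Finset.sum_div, Finset.sum_add_distrib, Finset.sum_ite_eq' Finset.univ i (fun _ => (1:ℝ)),
    Finset.sum_ite_eq' Finset.univ j (fun _ => (1:ℝ))]
  simp

lemma xpR_le_chiR {T : Finset (Fin n)} {i j : Fin n} (hi : i ∈ T) (hj : j ∈ T) (k : Fin n) :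
    xpR i j k ≤ chiR T k := by
  unfold xpR chiR
  by_cases hk : k ∈ T
  · simp only [hk, if_true]; split_ifs <;> norm_num
  · have hki : k ≠ i := fun h => hk (h ▸ hi)
    have hkj : k ≠ j := fun h => hk (h ▸ hj)
    simp [hk, hki, hkj]

lemma pair12 (T : Finset (Fin n)) (i j k l : Fin n) (hi : i ∈ T) (hj : j ∈ T) :
    0 ≤ XpR i j k l - xpR i j l * chiR T k - xpR i j k * chiR T l
        + chiR T k * chiR T l := by
  unfold XpR xpR chiR
  by_cases hk : k ∈ T
  · by_cases hl : l ∈ T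
    · simp only [hk, hl, if_true]
      by_cases hki : k = i <;> by_cases hkj : k = j <;> by_cases hli : l = i <;>
        by_cases hlj : l = j <;> subst_vars <;> simp_all <;> norm_num
    · have hli : l ≠ i := fun h => hl (h ▸ hi)
      have hlj : l ≠ j := fun h => hl (h ▸ hj)
      simp [hl, hli, hlj]
  · have hki : k ≠ i := fun h => hk (h ▸ hi)
    have hkj : k ≠ j := fun h => hk (h ▸ hj)
    simp [hk, hki, hkj]

lemma pair13 (T : Finset (Fin n)) (i j k l : Fin n) (hi : i ∈ T) (hj : j ∈ T) :
    XpR i j k l ≤ xpR i j l * chiR T k := by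
  unfold XpR xpR chiR
  by_cases hk : k ∈ T
  · simp only [hk, if_true, mul_one]
    by_cases hki : k = i <;> by_cases hkj : k = j <;> by_cases hli : l = i <;>
      by_cases hlj : l = j <;> subst_vars <;> simp_all <;> norm_num
  · have hki : k ≠ i := fun h => hk (h ▸ hi)
    have hkj : k ≠ j := fun h => hk (h ▸ hj)
    simp [hk, hki, hkj]

lemma triple_swap (f : Fin n → Fin n → Fin n → ℝ) :
    (∑ k, ∑ i, ∑ j, f i j k) = ∑ i, ∑ j, ∑ k, f i j k := by
  rw [Finset.sum_comm]
  exact Finset.sum_congr rfl fun i _ => Finset.sum_comm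

lemma comb2 (a b : Fin n → Fin n → ℝ) :
    (∑ i, ∑ j, a i j) - (∑ i, ∑ j, b i j) = ∑ i, ∑ j, (a i j - b i j) := by
  rw [← Finset.sum_sub_distrib]
  exact Finset.sum_congr rfl fun i _ => by rw [← Finset.sum_sub_distrib]

lemma comb4 (a b c d : Fin n → Fin n → ℝ) :
    (∑ i, ∑ j, a i j) - (∑ i, ∑ j, b i j) - (∑ i, ∑ j, c i j) + (∑ i, ∑ j, d i j)
      = ∑ i, ∑ j, (a i j - b i j - c i j + d i j) := by
  rw [← Finset.sum_sub_distrib, ← Finset.sum_sub_distrib, ← Finset.sum_add_distrib]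
  exact Finset.sum_congr rfl fun i _ => by
    rw [← Finset.sum_sub_distrib, ← Finset.sum_sub_distrib, ← Finset.sum_add_distrib]

lemma exists_pairset {ρ : ℕ} (h1 : 2 ≤ ρ) (h2 : ρ ≤ n) (i j : Fin n) :
    ∃ T : Finset (Fin n), i ∈ T ∧ j ∈ T ∧ T.card = ρ := by
  have hcard : ({i, j} : Finset (Fin n)).card ≤ ρ :=
    le_trans (Finset.card_insert_le i {j}) (by simpa using h1)
  obtain ⟨T, hsub, hT⟩ := Finset.exists_superset_card_eq hcard (by simpa using h2)
  exact ⟨T, hsub (by simp), hsub (by simp), hT⟩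

end StmtFourAux

open StmtFourAux in
theorem stmt4 {n : ℕ} (hn : 0 < n) (ρ : ℕ) (h1 : 2 ≤ ρ) (h2 : ρ ≤ n) :
    FR1proj n ρ = FR1 n := by
  ext p
  obtain ⟨x, X⟩ := p
  simp only [FR1proj, FR1, Set.mem_setOf_eq]
  constructor
  · rintro ⟨u, U, R, hsX, -, hx1, -, -, hx0, -, hXe, -, -, -, -, -, -, hX0, -, -⟩
    exact ⟨hsX, hx1, hXe, hx0, hX0⟩
  · rintro ⟨hsX, hx1, hXe, hx0, hX0⟩
    -- choose for each ordered pair (i, j) a set T i j of cardinality ρ containing i and j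
    choose T hTi hTj hTc using fun i j => exists_pairset h1 h2 i j
    -- column sums of X
    have hcol : ∀ k, (∑ i, X i k) = x k := by
      intro k
      rw [Finset.sum_congr rfl fun i _ => hsX.apply k i]
      exact hXe k
    have hXsum : (∑ i, ∑ j, X i j) = 1 := by
      rw [Finset.sum_congr rfl fun i _ => hXe i]; exact hx1
    -- key identity: x is the weighted combination of the pair vectors
    have hx_eq : ∀ k, (∑ i, ∑ j, X i j * xpR i j k) = x k := by
      intro k
      have h1' : ∀ i, (∑ j, X i j * xpR i j k)
          = ((if k = i then (1:ℝ) else 0) * x i + X i k) / 2 := by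
        intro i
        have hterm : ∀ j, X i j * xpR i j k
            = ((if k = i then (1:ℝ) else 0) * X i j
              + (if k = j then (1:ℝ) else 0) * X i j) / 2 := by
          intro j; unfold xpR; ring
        rw [Finset.sum_congr rfl fun j _ => hterm j, ← Finset.sum_div,
          Finset.sum_add_distrib, ← Finset.mul_sum, hXe i]
        congr 2
        rw [Finset.sum_congr rfl fun j _ => (ite_mul (k = j) (1:ℝ) 0 (X i j)),
          Finset.sum_congr rfl (fun j _ => by rw [one_mul, zero_mul] :
            ∀ j ∈ Finset.univ, (if k = j then (1:ℝ) * X i j else 0 * X i j)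
              = if k = j then X i j else 0),
          Finset.sum_ite_eq Finset.univ k (X i)]
        simp
      rw [Finset.sum_congr rfl fun i _ => h1' i, ← Finset.sum_div, Finset.sum_add_distrib]
      rw [Finset.sum_congr rfl fun i _ => (ite_mul (k = i) (1:ℝ) 0 (x i)),
        Finset.sum_congr rfl (fun i _ => by rw [one_mul, zero_mul] :
          ∀ i ∈ Finset.univ, (if k = i then (1:ℝ) * x i else 0 * x i)
            = if k = i then x i else 0),
        Finset.sum_ite_eq Finset.univ k x, hcol k]
      simp
    -- key identity: X is the weighted combination of the pair matrices
    have hX_eq : ∀ k l, (∑ i, ∑ j, X i j * XpR i j k l) = X k l := by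
      intro k l
      have h1' : ∀ i, (∑ j, X i j * XpR i j k l)
          = ((if k = i then X i l else 0) + (if l = i then X i k else 0)) / 2 := by
        intro i
        have hterm : ∀ j, X i j * XpR i j k l
            = ((if k = i then (if l = j then X i j else 0) else 0)
              + (if l = i then (if k = j then X i j else 0) else 0)) / 2 := by
          intro j; unfold XpR
          by_cases hki : k = i <;> by_cases hlj : l = j <;> by_cases hkj : k = j <;>
            by_cases hli : l = i <;> subst_vars <;> simp_all <;> try ring
        rw [Finset.sum_congr rfl fun j _ => hterm j, ← Finset.sum_div,
          Finset.sum_add_distrib]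
        congr 2
        · by_cases hki : k = i
          · simp only [hki, if_true]
            rw [Finset.sum_ite_eq Finset.univ l (X i)]; simp
          · simp [hki]
        · by_cases hli : l = i
          · simp only [hli, if_true]
            rw [Finset.sum_ite_eq Finset.univ k (X i)]; simp
          · simp [hli]
      rw [Finset.sum_congr rfl fun i _ => h1' i, ← Finset.sum_div, Finset.sum_add_distrib,
        Finset.sum_ite_eq Finset.univ k (fun i => X i l),
        Finset.sum_ite_eq Finset.univ l (fun i => X i k)]
      simp only [Finset.mem_univ, if_true]
      rw [hsX.apply l k]
      ring
    refine ⟨(fun k => ∑ i, ∑ j, X i j * chiR (T i j) k),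
      (Matrix.of fun k l => ∑ i, ∑ j, X i j * (chiR (T i j) k * chiR (T i j) l)),
      (Matrix.of fun k l => ∑ i, ∑ j, X i j * (xpR i j k * chiR (T i j) l)),
      hsX, ?_, hx1, ?_, ?_, hx0, ?_, hXe, ?_, ?_, ?_, ?_, ?_, ?_, hX0, ?_, ?_⟩
    -- U symmetric
    · refine Matrix.IsSymm.ext fun k l => ?_
      simp only [Matrix.of_apply]
      exact Finset.sum_congr rfl fun i _ => Finset.sum_congr rfl fun j _ => by ring
    -- sum u = ρ
    · rw [triple_swap fun i j k => X i j * chiR (T i j) k]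
      have h : ∀ i j, (∑ k, X i j * chiR (T i j) k) = X i j * (ρ : ℝ) := by
        intro i j
        rw [← Finset.mul_sum, sum_chiR, hTc i j]
      rw [Finset.sum_congr rfl fun i _ => Finset.sum_congr rfl fun j _ => h i j]
      rw [Finset.sum_congr rfl fun i _ => (Finset.sum_mul Finset.univ (fun j => X i j) (ρ : ℝ)).symm, ← Finset.sum_mul,
        hXsum, one_mul]
    -- x ≤ u
    · intro k
      rw [← hx_eq k]
      exact Finset.sum_le_sum fun i _ => Finset.sum_le_sum fun j _ =>
        mul_le_mul_of_nonneg_left (xpR_le_chiR (hTi i j) (hTj i j) k) (hX0 i j)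
    -- diag U = u
    · intro k
      simp only [Matrix.of_apply]
      exact Finset.sum_congr rfl fun i _ => Finset.sum_congr rfl fun j _ => by
        rw [chiR_sq]
    -- column sums of R
    · intro l
      simp only [Matrix.of_apply]
      rw [triple_swap fun i j k => X i j * (xpR i j k * chiR (T i j) l)]
      refine Finset.sum_congr rfl fun i _ => Finset.sum_congr rfl fun j _ => ?_
      have : ∀ k, X i j * (xpR i j k * chiR (T i j) l)
          = (X i j * chiR (T i j) l) * xpR i j k := fun k => by ring
      rw [Finset.sum_congr rfl fun k _ => this k, ← Finset.mul_sum, sum_xpR, mul_one]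
    -- row sums of R
    · intro k
      simp only [Matrix.of_apply]
      rw [triple_swap fun i j l => X i j * (xpR i j k * chiR (T i j) l)]
      have h : ∀ i j, (∑ l, X i j * (xpR i j k * chiR (T i j) l))
          = (ρ : ℝ) * (X i j * xpR i j k) := by
        intro i j
        have : ∀ l, X i j * (xpR i j k * chiR (T i j) l)
            = (X i j * xpR i j k) * chiR (T i j) l := fun l => by ring
        rw [Finset.sum_congr rfl fun l _ => this l, ← Finset.mul_sum, sum_chiR, hTc i j]
        ring
      rw [Finset.sum_congr rfl fun i _ => Finset.sum_congr rfl fun j _ => h i j]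
      rw [Finset.sum_congr rfl fun i _ => (Finset.mul_sum _ _ _).symm, ← Finset.mul_sum,
        hx_eq k]
    -- row sums of U
    · intro k
      simp only [Matrix.of_apply]
      rw [triple_swap fun i j l => X i j * (chiR (T i j) k * chiR (T i j) l)]
      have h : ∀ i j, (∑ l, X i j * (chiR (T i j) k * chiR (T i j) l))
          = (ρ : ℝ) * (X i j * chiR (T i j) k) := by
        intro i j
        have : ∀ l, X i j * (chiR (T i j) k * chiR (T i j) l)
            = (X i j * chiR (T i j) k) * chiR (T i j) l := fun l => by ring
        rw [Finset.sum_congr rfl fun l _ => this l, ← Finset.mul_sum, sum_chiR, hTc i j]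
        ring
      rw [Finset.sum_congr rfl fun i _ => Finset.sum_congr rfl fun j _ => h i j]
      rw [Finset.sum_congr rfl fun i _ => (Finset.mul_sum _ _ _).symm, ← Finset.mul_sum]
    -- 0 ≤ X - Rᵀ - R + U
    · intro k l
      simp only [Matrix.of_apply]
      rw [← hX_eq k l,
        comb4 (fun i j => X i j * XpR i j k l)
          (fun i j => X i j * (xpR i j l * chiR (T i j) k))
          (fun i j => X i j * (xpR i j k * chiR (T i j) l))
          (fun i j => X i j * (chiR (T i j) k * chiR (T i j) l))]
      refine Finset.sum_nonneg fun i _ => Finset.sum_nonneg fun j _ => ?_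
      have hfac : X i j * XpR i j k l - X i j * (xpR i j l * chiR (T i j) k)
          - X i j * (xpR i j k * chiR (T i j) l)
          + X i j * (chiR (T i j) k * chiR (T i j) l)
          = X i j * (XpR i j k l - xpR i j l * chiR (T i j) k
            - xpR i j k * chiR (T i j) l + chiR (T i j) k * chiR (T i j) l) := by ring
      rw [hfac]
      exact mul_nonneg (hX0 i j) (pair12 (T i j) i j k l (hTi i j) (hTj i j))
    -- X - Rᵀ ≤ 0
    · intro k l
      simp only [Matrix.of_apply]
      rw [← hX_eq k l,
        comb2 (fun i j => X i j * XpR i j k l)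
          (fun i j => X i j * (xpR i j l * chiR (T i j) k))]
      refine Finset.sum_nonpos fun i _ => Finset.sum_nonpos fun j _ => ?_
      have hfac : X i j * XpR i j k l - X i j * (xpR i j l * chiR (T i j) k)
          = X i j * (XpR i j k l - xpR i j l * chiR (T i j) k) := by ring
      rw [hfac]
      exact mul_nonpos_of_nonneg_of_nonpos (hX0 i j)
        (sub_nonpos.mpr (pair13 (T i j) i j k l (hTi i j) (hTj i j)))
    -- R - U ≤ 0
    · intro k l
      simp only [Matrix.of_apply]
      rw [comb2 (fun i j => X i j * (xpR i j k * chiR (T i j) l))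
          (fun i j => X i j * (chiR (T i j) k * chiR (T i j) l))]
      refine Finset.sum_nonpos fun i _ => Finset.sum_nonpos fun j _ => ?_
      have hfac : X i j * (xpR i j k * chiR (T i j) l)
          - X i j * (chiR (T i j) k * chiR (T i j) l)
          = X i j * ((xpR i j k - chiR (T i j) k) * chiR (T i j) l) := by ring
      rw [hfac]
      exact mul_nonpos_of_nonneg_of_nonpos (hX0 i j)
        (mul_nonpos_of_nonpos_of_nonneg
          (sub_nonpos.mpr (xpR_le_chiR (hTi i j) (hTj i j) k)) (chiR_nonneg _ l))
    -- R ≥ 0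
    · intro k l
      simp only [Matrix.of_apply]
      exact Finset.sum_nonneg fun i _ => Finset.sum_nonneg fun j _ =>
        mul_nonneg (hX0 i j) (mul_nonneg (xpR_nonneg i j k) (chiR_nonneg _ l))
    -- U ≥ 0
    · intro k l
      simp only [Matrix.of_apply]
      exact Finset.sum_nonneg fun i _ => Finset.sum_nonneg fun j _ =>
        mul_nonneg (hX0 i j) (mul_nonneg (chiR_nonneg _ k) (chiR_nonneg _ l))

end
end

section
/- For every symmetric matrix Q ∈ S^n: (i) ℓ^{R1}_1(Q) = ℓ_1(Q) = min_{1≤k≤n} Q_{kk}; (ii) for each ρ ∈ {2,3,…,n}, ℓ^{R1}_ρ(Q) = min_{1≤i≤j≤n} Q_{ij}. -/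
open Matrix BigOperators

noncomputable section

def ellR1 {n : ℕ} (Q : Matrix (Fin n) (Fin n) ℝ) (ρ : ℕ) : ℝ :=
  sInf ((fun p => ip Q p.2) '' FR1proj n ρ)

/-! ### Auxiliary construction -/

section Construction
variable {n : ℕ} (a b : Fin n) (S : Finset (Fin n))

def xx (a b : Fin n) : Fin n → ℝ :=
  fun i => ((if i = a then 1 else 0) + (if i = b then 1 else 0))/2

def vv (S : Finset (Fin n)) : Fin n → ℝ := fun i => if i ∈ S then 1 else 0

def XX : Matrix (Fin n) (Fin n) ℝ :=
  Matrix.of fun i j => ((if i = a then (1:ℝ) else 0) * (if j = b then 1 else 0)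
    + (if i = b then (1:ℝ) else 0) * (if j = a then 1 else 0))/2

def UU (S : Finset (Fin n)) : Matrix (Fin n) (Fin n) ℝ :=
  Matrix.of fun i j => vv S i * vv S j

def RR (a b : Fin n) (S : Finset (Fin n)) : Matrix (Fin n) (Fin n) ℝ :=
  Matrix.of fun i j => xx a b i * vv S j

lemma xx_nonneg (i : Fin n) : 0 ≤ xx a b i := by
  unfold xx; positivity

lemma vv_nonneg (i : Fin n) : 0 ≤ vv S i := by unfold vv; positivity

lemma xx_le_vv (ha : a ∈ S) (hb : b ∈ S) (i : Fin n) : xx a b i ≤ vv S i := by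
  unfold xx vv
  by_cases hi : i ∈ S
  · simp [hi]; split <;> split <;> norm_num
  · have h1 : ¬ i = a := fun h => hi (h ▸ ha)
    have h2 : ¬ i = b := fun h => hi (h ▸ hb)
    simp [hi, h1, h2]

lemma sum_xx : (∑ i, xx a b i) = 1 := by
  unfold xx
  rw [← Finset.sum_div, Finset.sum_add_distrib, Finset.sum_ite_eq', Finset.sum_ite_eq']
  simp

lemma sum_vv {ρ : ℕ} (hS : S.card = ρ) : (∑ i, vv S i) = (ρ : ℝ) := by
  unfold vv
  rw [Finset.sum_ite_mem, Finset.univ_inter, Finset.sum_const, ← hS]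
  simp

lemma XX_symm : (XX a b).IsSymm := by
  unfold XX Matrix.IsSymm
  ext i j
  simp only [Matrix.transpose_apply, Matrix.of_apply]
  ring

lemma UU_symm : (UU S).IsSymm := by
  unfold UU Matrix.IsSymm
  ext i j
  simp [Matrix.transpose_apply, mul_comm]

lemma row_XX (i : Fin n) : (∑ j, XX a b i j) = xx a b i := by
  unfold XX xx
  simp only [Matrix.of_apply]
  rw [← Finset.sum_div, Finset.sum_add_distrib, ← Finset.mul_sum, ← Finset.mul_sum,
    Finset.sum_ite_eq', Finset.sum_ite_eq']
  simp [mul_comm]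

lemma col_RR (j : Fin n) : (∑ i, RR a b S i j) = vv S j := by
  unfold RR
  simp only [Matrix.of_apply]
  rw [← Finset.sum_mul, sum_xx, one_mul]

lemma row_RR {ρ : ℕ} (hS : S.card = ρ) (i : Fin n) :
    (∑ j, RR a b S i j) = (ρ:ℝ) * xx a b i := by
  unfold RR
  simp only [Matrix.of_apply]
  rw [← Finset.mul_sum, sum_vv S hS, mul_comm]

lemma row_UU {ρ : ℕ} (hS : S.card = ρ) (i : Fin n) :
    (∑ j, UU S i j) = (ρ:ℝ) * vv S i := by
  unfold UU
  simp only [Matrix.of_apply]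
  rw [← Finset.mul_sum, sum_vv S hS, mul_comm]

lemma diag_UU (i : Fin n) : UU S i i = vv S i := by
  unfold UU vv
  simp only [Matrix.of_apply]
  by_cases h : i ∈ S <;> simp [h]

lemma ineq1 (ha : a ∈ S) (hb : b ∈ S) (i j : Fin n) :
    0 ≤ XX a b i j - RR a b S j i - RR a b S i j + UU S i j := by
  unfold XX RR UU xx vv
  simp only [Matrix.of_apply]
  by_cases hi : i ∈ S
  · by_cases hj : j ∈ S
    · simp only [hi, hj, if_true]
      by_cases hab : a = b <;> by_cases h1 : i = a <;> by_cases h2 : i = b <;>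
        by_cases h3 : j = a <;> by_cases h4 : j = b <;>
        simp [h1, h2, h3, h4, hab, eq_comm] <;> norm_num
    · have h3 : ¬ j = a := fun h => hj (h ▸ ha)
      have h4 : ¬ j = b := fun h => hj (h ▸ hb)
      simp [hi, hj, h3, h4]
  · have h1 : ¬ i = a := fun h => hi (h ▸ ha)
    have h2 : ¬ i = b := fun h => hi (h ▸ hb)
    simp [hi, h1, h2]

lemma ineq2 (ha : a ∈ S) (hb : b ∈ S) (i j : Fin n) :
    XX a b i j - RR a b S j i ≤ 0 := by
  unfold XX RR xx vv
  simp only [Matrix.of_apply]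
  by_cases hi : i ∈ S
  · by_cases hj : j ∈ S
    · simp only [hi, hj, if_true]
      by_cases hab : a = b <;> by_cases h1 : i = a <;> by_cases h2 : i = b <;>
        by_cases h3 : j = a <;> by_cases h4 : j = b <;>
        simp [h1, h2, h3, h4, hab, eq_comm] <;> norm_num
    · have h3 : ¬ j = a := fun h => hj (h ▸ ha)
      have h4 : ¬ j = b := fun h => hj (h ▸ hb)
      simp [hi, hj, h3, h4]
  · have h1 : ¬ i = a := fun h => hi (h ▸ ha)
    have h2 : ¬ i = b := fun h => hi (h ▸ hb)
    simp [hi, h1, h2]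

lemma ineq3 (ha : a ∈ S) (hb : b ∈ S) (i j : Fin n) :
    RR a b S i j - UU S i j ≤ 0 := by
  unfold RR UU
  simp only [Matrix.of_apply]
  have := mul_le_mul_of_nonneg_right (xx_le_vv a b S ha hb i) (vv_nonneg S j)
  linarith

lemma XX_nonneg (i j : Fin n) : 0 ≤ XX a b i j := by
  unfold XX
  simp only [Matrix.of_apply]
  apply div_nonneg _ (by norm_num)
  apply add_nonneg <;> apply mul_nonneg <;> split <;> norm_num

lemma RR_nonneg (i j : Fin n) : 0 ≤ RR a b S i j := by
  unfold RR
  simp only [Matrix.of_apply]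
  exact mul_nonneg (xx_nonneg a b i) (vv_nonneg S j)

lemma UU_nonneg (i j : Fin n) : 0 ≤ UU S i j := by
  unfold UU
  simp only [Matrix.of_apply]
  exact mul_nonneg (vv_nonneg S i) (vv_nonneg S j)

lemma construct {ρ : ℕ} (ha : a ∈ S) (hb : b ∈ S) (hS : S.card = ρ) :
    R1Feasible ρ (xx a b) (vv S) (XX a b) (UU S) (RR a b S) :=
  ⟨XX_symm a b, UU_symm S, sum_xx a b, sum_vv S hS, xx_le_vv a b S ha hb, xx_nonneg a b,
   diag_UU S, row_XX a b, col_RR a b S, row_RR a b S hS, row_UU S hS,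
   ineq1 a b S ha hb, ineq2 a b S ha hb, ineq3 a b S ha hb,
   XX_nonneg a b, RR_nonneg a b S, UU_nonneg S⟩

lemma ip_XX (Q : Matrix (Fin n) (Fin n) ℝ) :
    ip Q (XX a b) = (Q a b + Q b a)/2 := by
  have h : ∀ i j : Fin n, Q i j * XX a b i j
      = ((if j = b then (if i = a then Q i j else 0) else 0)
        + (if j = a then (if i = b then Q i j else 0) else 0))/2 := by
    intro i j
    unfold XX
    simp only [Matrix.of_apply]
    by_cases hab : a = b <;> by_cases h1 : i = a <;> by_cases h2 : i = b <;>
      by_cases h3 : j = a <;> by_cases h4 : j = b <;>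
      simp [h1, h2, h3, h4, hab, eq_comm] <;> ring
  unfold ip
  calc (∑ i, ∑ j, Q i j * XX a b i j)
      = ∑ i, ((if i = a then Q i b else 0) + (if i = b then Q i a else 0))/2 := by
        refine Finset.sum_congr rfl fun i _ => ?_
        simp only [h]
        rw [← Finset.sum_div, Finset.sum_add_distrib, Finset.sum_ite_eq', Finset.sum_ite_eq']
        simp
    _ = (Q a b + Q b a)/2 := by
        rw [← Finset.sum_div, Finset.sum_add_distrib, Finset.sum_ite_eq', Finset.sum_ite_eq']
        simp

end Construction

/-! ### Generic lower bounds -/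

lemma sInf_eq_of_mem_of_lb {m : ℝ} {s : Set ℝ} (h1 : m ∈ s) (h2 : ∀ y ∈ s, m ≤ y) :
    sInf s = m :=
  le_antisymm (csInf_le ⟨m, h2⟩ h1) (le_csInf ⟨m, h1⟩ h2)

lemma ip_lb {n : ℕ} {Q X : Matrix (Fin n) (Fin n) ℝ} {x : Fin n → ℝ} {m : ℝ}
    (hQm : ∀ i j, m ≤ Q i j) (hXnn : ∀ i j, 0 ≤ X i j)
    (hrow : ∀ i, (∑ j, X i j) = x i) (hx : (∑ i, x i) = 1) :
    m ≤ ip Q X := by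
  have key : ∀ i : Fin n, m * x i ≤ ∑ j, Q i j * X i j := by
    intro i
    calc m * x i = ∑ j, m * X i j := by rw [← Finset.mul_sum, hrow]
    _ ≤ ∑ j, Q i j * X i j :=
        Finset.sum_le_sum fun j _ => mul_le_mul_of_nonneg_right (hQm i j) (hXnn i j)
  calc m = ∑ i, m * x i := by rw [← Finset.mul_sum, hx, mul_one]
  _ ≤ ∑ i, ∑ j, Q i j * X i j := Finset.sum_le_sum fun i _ => key i
  _ = ip Q X := rfl

lemma ip_lb_one {n : ℕ} {Q : Matrix (Fin n) (Fin n) ℝ} {x u : Fin n → ℝ}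
    {X U R : Matrix (Fin n) (Fin n) ℝ} {m : ℝ}
    (hQm : ∀ k, m ≤ Q k k) (hf : R1Feasible 1 x u X U R) : m ≤ ip Q X := by
  obtain ⟨hXs, hUs, hx1, hu1, hxu, hxnn, hUd, hXr, hRc, hRr, hUr, hi1, hi2, hi3,
    hXnn, hRnn, hUnn⟩ := hf
  have hUoff : ∀ i j : Fin n, i ≠ j → U i j = 0 := by
    intro i j hij
    have h1 : (∑ k, U i k) = U i i := by rw [hUr i, hUd i]; norm_num
    have h2 : (∑ k ∈ Finset.univ.erase i, U i k) = 0 := by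
      have h3 := Finset.add_sum_erase Finset.univ (fun k => U i k) (Finset.mem_univ i)
      linarith [h1, h3]
    exact (Finset.sum_eq_zero_iff_of_nonneg (fun k _ => hUnn i k)).mp h2 j
      (Finset.mem_erase.mpr ⟨hij.symm, Finset.mem_univ j⟩)
  have hXoff : ∀ i j : Fin n, i ≠ j → X i j = 0 := by
    intro i j hij
    have hU0 : U j i = 0 := hUoff j i hij.symm
    have hR0 : R j i = 0 := le_antisymm (by have := hi3 j i; linarith) (hRnn j i)
    exact le_antisymm (by have := hi2 i j; linarith) (hXnn i j)
  have hXdiag : ∀ i : Fin n, X i i = x i := by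
    intro i
    rw [← hXr i]
    exact (Finset.sum_eq_single i (fun j _ hj => hXoff i j (Ne.symm hj)) (by simp)).symm
  have hinner : ∀ i : Fin n, (∑ j, Q i j * X i j) = Q i i * x i := by
    intro i
    rw [← hXdiag i]
    exact Finset.sum_eq_single i (fun j _ hj => by rw [hXoff i j (Ne.symm hj), mul_zero])
      (by simp)
  calc m = ∑ i, m * x i := by rw [← Finset.mul_sum, hx1, mul_one]
  _ ≤ ∑ i, Q i i * x i :=
      Finset.sum_le_sum fun i _ => mul_le_mul_of_nonneg_right (hQm i) (hxnn i)
  _ = ∑ i, ∑ j, Q i j * X i j := Finset.sum_congr rfl fun i _ => (hinner i).symm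
  _ = ip Q X := rfl

lemma quadForm_single {n : ℕ} (Q : Matrix (Fin n) (Fin n) ℝ) (k : Fin n) (x : Fin n → ℝ)
    (h : ∀ i, i ≠ k → x i = 0) : quadForm Q x = x k * (Q k k * x k) := by
  unfold quadForm
  simp only [dotProduct, Matrix.mulVec, dotProduct]
  rw [Finset.sum_eq_single k (fun j _ hj => by rw [h j hj, zero_mul]) (by simp)]
  congr 1
  rw [Finset.sum_eq_single k (fun j _ hj => by rw [h j hj, mul_zero]) (by simp)]

theorem stmt5 {n : ℕ} (hn : 0 < n) (Q : Matrix (Fin n) (Fin n) ℝ) (hQ : Q.IsSymm) :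
    (ellR1 Q 1 = ellSparse Q 1 ∧
      ellSparse Q 1 = (Finset.univ.inf' (Finset.univ_nonempty_iff.mpr ⟨⟨0, hn⟩⟩) fun k => Q k k)) ∧
    ∀ ρ : ℕ, 2 ≤ ρ → ρ ≤ n →
      ellR1 Q ρ =
        (Finset.univ.filter fun p : Fin n × Fin n => p.1 ≤ p.2).inf'
        (Finset.filter_nonempty_iff.mpr ⟨(⟨0, hn⟩, ⟨0, hn⟩), Finset.mem_univ _, le_rfl⟩)
        (fun p => Q p.1 p.2) := by
  have hne : (Finset.univ : Finset (Fin n)).Nonempty := Finset.univ_nonempty_iff.mpr ⟨⟨0, hn⟩⟩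
  set m₁ : ℝ := Finset.univ.inf' hne (fun k => Q k k) with hm₁def
  obtain ⟨k0, -, hk0⟩ := Finset.exists_mem_eq_inf' hne (fun k => Q k k)
  have hm₁le : ∀ k, m₁ ≤ Q k k := fun k => Finset.inf'_le _ (Finset.mem_univ k)
  -- ellSparse Q 1 = m₁
  have hSparse : ellSparse Q 1 = m₁ := by
    apply sInf_eq_of_mem_of_lb
    · refine ⟨fun i => if i = k0 then 1 else 0, ⟨⟨by simp [Finset.sum_ite_eq'],
        fun i => by by_cases h : i = k0 <;> simp [h]⟩, ?_⟩, ?_⟩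
      · unfold sparsity
        have : {i : Fin n | (if i = k0 then (1:ℝ) else 0) ≠ 0} = {k0} := by
          ext i
          by_cases h : i = k0 <;> simp [h]
        rw [this, Set.ncard_singleton]
      · rw [quadForm_single Q k0 _ (fun i hi => by simp [hi])]
        simp only [ite_true, if_true, one_mul, mul_one]
        rw [hm₁def, hk0]
    · rintro y ⟨x, ⟨⟨hx1, hxnn⟩, hxs⟩, rfl⟩
      have hk : ∃ k, x k ≠ 0 := by
        by_contra h
        push_neg at h
        simp [h] at hx1
      obtain ⟨k, hk⟩ := hk
      have hT : ({k} : Set (Fin n)) = {i | x i ≠ 0} := by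
        refine Set.eq_of_subset_of_ncard_le (Set.singleton_subset_iff.mpr hk) ?_ (Set.toFinite _)
        simpa [sparsity, Set.ncard_singleton] using hxs
      have hzero : ∀ i, i ≠ k → x i = 0 := by
        intro i hi
        by_contra h
        have : i ∈ ({k} : Set (Fin n)) := hT ▸ h
        exact hi (by simpa using this)
      have hxk : x k = 1 := by
        rw [← hx1]
        exact (Finset.sum_eq_single k (fun j _ hj => hzero j hj) (by simp)).symm
      rw [quadForm_single Q k x hzero, hxk]
      simpa using hm₁le k
  -- ellR1 Q 1 = m₁
  have hR1one : ellR1 Q 1 = m₁ := by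
    apply sInf_eq_of_mem_of_lb
    · refine ⟨(xx k0 k0, XX k0 k0), ⟨vv {k0}, UU {k0}, RR k0 k0 {k0},
        construct k0 k0 {k0} (Finset.mem_singleton_self k0) (Finset.mem_singleton_self k0)
          (Finset.card_singleton k0)⟩, ?_⟩
      show ip Q (XX k0 k0) = m₁
      rw [ip_XX, hm₁def, hk0]
      ring
    · rintro y ⟨⟨x, X⟩, ⟨u, U, R, hf⟩, rfl⟩
      exact ip_lb_one hm₁le hf
  refine ⟨⟨hR1one.trans hSparse.symm, hSparse⟩, ?_⟩
  -- part (ii)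
  intro ρ hρ2 hρn
  have hfne : ((Finset.univ.filter fun p : Fin n × Fin n => p.1 ≤ p.2)).Nonempty :=
    Finset.filter_nonempty_iff.mpr ⟨(⟨0, hn⟩, ⟨0, hn⟩), Finset.mem_univ _, le_rfl⟩
  set m₂ : ℝ := (Finset.univ.filter fun p : Fin n × Fin n => p.1 ≤ p.2).inf' hfne
    (fun p => Q p.1 p.2) with hm₂def
  have hm₂le : ∀ i j : Fin n, m₂ ≤ Q i j := by
    intro i j
    rcases le_total i j with h | h
    · exact Finset.inf'_le _ (Finset.mem_filter.mpr ⟨Finset.mem_univ (i, j), h⟩)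
    · have := Finset.inf'_le (s := Finset.univ.filter fun p : Fin n × Fin n => p.1 ≤ p.2)
        (fun p => Q p.1 p.2) (Finset.mem_filter.mpr ⟨Finset.mem_univ (j, i), h⟩)
      have h2 : m₂ ≤ Q j i := this
      rw [← hQ.apply i j]
      exact h2
  obtain ⟨p0, hp0mem, hp0⟩ := Finset.exists_mem_eq_inf' hfne (fun p : Fin n × Fin n => Q p.1 p.2)
  obtain ⟨a, b⟩ := p0
  have hab : m₂ = Q a b := hp0
  -- find S of cardinality ρ containing a and b
  have hcard2 : ({a, b} : Finset (Fin n)).card ≤ ρ :=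
    le_trans (le_trans (Finset.card_insert_le a {b}) (by simp)) hρ2
  obtain ⟨S, hsub, hScard⟩ := Finset.exists_superset_card_eq hcard2 (by simpa using hρn)
  have haS : a ∈ S := hsub (Finset.mem_insert_self a {b})
  have hbS : b ∈ S := hsub (by simp)
  apply sInf_eq_of_mem_of_lb
  · refine ⟨(xx a b, XX a b), ⟨vv S, UU S, RR a b S, construct a b S haS hbS hScard⟩, ?_⟩
    show ip Q (XX a b) = m₂
    rw [ip_XX, hQ.apply a b, hab]
    ring
  · rintro y ⟨⟨x, X⟩, ⟨u, U, R, hf⟩, rfl⟩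
    obtain ⟨hXs, hUs, hx1, hu1, hxu, hxnn, hUd, hXr, hRc, hRr, hUr, hi1, hi2, hi3,
      hXnn, hRnn, hUnn⟩ := hf
    exact ip_lb hm₂le hXnn hXr hx1

end
end

section
/- For every symmetric matrix Q ∈ S^n and every ρ ∈ {1,…,n}, the RLT relaxation of the sparse StQP is exact, i.e., ℓ^{R1}_ρ(Q) = ℓ_ρ(Q), if and only if ρ = 1 or min_{1≤i≤j≤n} Q_{ij} = min_{1≤k≤n} Q_{kk}. -/
open Matrix BigOperators

noncomputable section

/-! ### Auxiliary lemmas -/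

set_option maxHeartbeats 2000000

def ev {n : ℕ} (k : Fin n) : Fin n → ℝ := fun i => if i = k then 1 else 0

lemma hevsum {n : ℕ} (k : Fin n) : (∑ i, ev k i) = 1 := by simp [ev]

lemma quadForm_eq {n : ℕ} (Q : Matrix (Fin n) (Fin n) ℝ) (x : Fin n → ℝ) :
    quadForm Q x = ∑ i, ∑ j, x i * x j * Q i j := by
  unfold quadForm
  simp only [dotProduct, Matrix.mulVec, Finset.mul_sum]
  congr 1; ext i; congr 1; ext j; ring

lemma quadForm_ge {n : ℕ} {Q : Matrix (Fin n) (Fin n) ℝ} {c : ℝ}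
    (hc : ∀ i j, c ≤ Q i j) {x : Fin n → ℝ} (hx : x ∈ simplexF n) :
    c + ∑ i, (Q i i - c) * (x i)^2 ≤ quadForm Q x := by
  obtain ⟨hx1, hx0⟩ := hx
  rw [quadForm_eq]
  have key : ∀ i j, c * (x i * x j) + (if j = i then (Q i i - c) * (x i)^2 else 0)
      ≤ x i * x j * Q i j := by
    intro i j
    by_cases h : j = i
    · subst h; simp; nlinarith [hc j j, hx0 j]
    · simp [h]
      nlinarith [mul_le_mul_of_nonneg_right (hc i j) (mul_nonneg (hx0 i) (hx0 j))]
  calc c + ∑ i, (Q i i - c) * (x i)^2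
      = ∑ i, ∑ j, (c * (x i * x j) + (if j = i then (Q i i - c) * (x i)^2 else 0)) := by
        simp only [Finset.sum_add_distrib, Finset.sum_ite_eq' Finset.univ,
          Finset.mem_univ, if_true]
        have h1 : (∑ i, ∑ j, c * (x i * x j)) = c * ((∑ i, x i) * (∑ j, x j)) := by
          rw [Finset.sum_mul_sum]; simp_rw [Finset.mul_sum]
        rw [h1, hx1]; ring
    _ ≤ ∑ i, ∑ j, x i * x j * Q i j := by
        apply Finset.sum_le_sum; intro i _; apply Finset.sum_le_sum; intro j _; exact key i j

lemma quadForm_ge_c {n : ℕ} {Q : Matrix (Fin n) (Fin n) ℝ} {c : ℝ}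
    (hc : ∀ i j, c ≤ Q i j) {x : Fin n → ℝ} (hx : x ∈ simplexF n) :
    c ≤ quadForm Q x := by
  have h := quadForm_ge hc hx
  have h2 : (0:ℝ) ≤ ∑ i, (Q i i - c) * (x i)^2 :=
    Finset.sum_nonneg fun i _ => mul_nonneg (by linarith [hc i i]) (sq_nonneg _)
  linarith

lemma quadForm_ge_strict {n : ℕ} (hn : 0 < n) {Q : Matrix (Fin n) (Fin n) ℝ} {c d : ℝ}
    (hc : ∀ i j, c ≤ Q i j) (hd : ∀ k, d ≤ Q k k) (hcd : c ≤ d)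
    {x : Fin n → ℝ} (hx : x ∈ simplexF n) :
    c + (d - c) / n ≤ quadForm Q x := by
  have h := quadForm_ge hc hx
  have hS : (1:ℝ)/n ≤ ∑ i, (x i)^2 := by
    have hcs := sq_sum_le_card_mul_sum_sq (ι := Fin n) (α := ℝ) (s := Finset.univ) (f := x)
    simp only [Finset.card_univ, Fintype.card_fin] at hcs
    rw [hx.1] at hcs
    rw [div_le_iff₀ (by positivity)]
    calc (1:ℝ) = 1^2 := by norm_num
    _ ≤ (n:ℝ) * ∑ i, (x i)^2 := by simpa using hcs
    _ = _ := by ring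
  have h2 : (d - c) * (1/n) ≤ ∑ i, (Q i i - c) * (x i)^2 := by
    calc (d - c) * (1/n) ≤ (d - c) * ∑ i, (x i)^2 :=
          mul_le_mul_of_nonneg_left hS (by linarith)
    _ = ∑ i, (d - c) * (x i)^2 := by rw [Finset.mul_sum]
    _ ≤ ∑ i, (Q i i - c) * (x i)^2 := by
          apply Finset.sum_le_sum; intro i _
          exact mul_le_mul_of_nonneg_right (by linarith [hd i]) (sq_nonneg _)
  calc c + (d - c)/n = c + (d - c) * (1/n) := by ring
  _ ≤ c + ∑ i, (Q i i - c) * (x i)^2 := by linarith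
  _ ≤ _ := h

lemma ip_ge {n : ℕ} {Q : Matrix (Fin n) (Fin n) ℝ} {c : ℝ}
    (hc : ∀ i j, c ≤ Q i j) {ρ : ℕ} {x u : Fin n → ℝ} {X U R : Matrix (Fin n) (Fin n) ℝ}
    (h : R1Feasible ρ x u X U R) : c ≤ ip Q X := by
  obtain ⟨-, -, hx1, -, -, -, -, hXrow, -, -, -, -, -, -, hX0, -, -⟩ := h
  have key : (∑ i, ∑ j, c * X i j) ≤ ip Q X := by
    apply Finset.sum_le_sum; intro i _; apply Finset.sum_le_sum; intro j _
    exact mul_le_mul_of_nonneg_right (hc i j) (hX0 i j)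
  calc c = ∑ i, ∑ j, c * X i j := by
        simp_rw [← Finset.mul_sum, hXrow, hx1, mul_one]
  _ ≤ ip Q X := key

lemma ip_ge_diag {n : ℕ} {Q : Matrix (Fin n) (Fin n) ℝ} {d : ℝ}
    (hd : ∀ k, d ≤ Q k k) {x u : Fin n → ℝ} {X U R : Matrix (Fin n) (Fin n) ℝ}
    (h : R1Feasible 1 x u X U R) : d ≤ ip Q X := by
  obtain ⟨-, -, hx1, hu1, hxu, hx0, hUd, hXrow, hRcol, hRrow, hUrow, h4, hXR, hRU, hX0, hR0, hU0⟩ := h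
  have hux : ∀ i, u i = x i := by
    have hsum : (∑ i, (u i - x i)) = 0 := by
      rw [Finset.sum_sub_distrib, hx1, hu1]; norm_num
    have := (Finset.sum_eq_zero_iff_of_nonneg (fun i _ => by linarith [hxu i])).mp hsum
    intro i; have := this i (Finset.mem_univ i); linarith
  have hUoff : ∀ i j, j ≠ i → U i j = 0 := by
    intro i j hji
    have hrow : (∑ j, U i j) = u i := by rw [hUrow i]; norm_num
    have hsplit : (∑ j, U i j) = U i i + ∑ j ∈ Finset.univ.erase i, U i j := by
      rw [← Finset.sum_erase_add _ _ (Finset.mem_univ i)]; ring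
    have hz : (∑ j ∈ Finset.univ.erase i, U i j) = 0 := by
      rw [hsplit, hUd i] at hrow; linarith
    have := (Finset.sum_eq_zero_iff_of_nonneg (fun j _ => hU0 i j)).mp hz
    exact this j (Finset.mem_erase.mpr ⟨hji, Finset.mem_univ j⟩)
  have hRoff : ∀ i j, j ≠ i → R i j = 0 := fun i j hji => by
    have := hRU i j; have := hR0 i j; have := hUoff i j hji; linarith
  have hXoff : ∀ i j, j ≠ i → X i j = 0 := fun i j hji => by
    have h1 := hXR i j; have h2 := hX0 i j
    have h3 := hRoff j i (fun hh => hji hh.symm); linarith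
  have hXd : ∀ i, X i i = x i := by
    intro i
    have hsplit : (∑ j, X i j) = X i i + ∑ j ∈ Finset.univ.erase i, X i j := by
      rw [← Finset.sum_erase_add _ _ (Finset.mem_univ i)]; ring
    have hz : (∑ j ∈ Finset.univ.erase i, X i j) = 0 :=
      Finset.sum_eq_zero fun j hj => hXoff i j (Finset.mem_erase.mp hj).1
    have := hXrow i; rw [hsplit, hz] at this; linarith
  have hipX : ip Q X = ∑ i, Q i i * x i := by
    unfold ip
    apply Finset.sum_congr rfl; intro i _
    rw [Finset.sum_eq_single i (fun j _ hji => by rw [hXoff i j hji, mul_zero])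
      (fun h => absurd (Finset.mem_univ i) h), hXd i]
  rw [hipX]
  calc d = ∑ i, d * x i := by rw [← Finset.mul_sum, hx1, mul_one]
  _ ≤ ∑ i, Q i i * x i :=
      Finset.sum_le_sum fun i _ => mul_le_mul_of_nonneg_right (hd i) (hx0 i)

lemma vertex_feasible {n : ℕ} (k : Fin n) {ρ : ℕ} (h1 : 1 ≤ ρ) (h2 : ρ ≤ n) :
    ∃ u U R, R1Feasible ρ (ev k) u (Matrix.of fun i j => ev k i * ev k j) U R := by
  obtain ⟨T, hkT, hTcard⟩ : ∃ T : Finset (Fin n), {k} ⊆ T ∧ T.card = ρ := by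
    refine Finset.exists_superset_card_eq ?_ ?_
    · simpa using h1
    · simpa using h2
  have hkT' : k ∈ T := hkT (Finset.mem_singleton_self k)
  set u : Fin n → ℝ := fun i => if i ∈ T then 1 else 0 with hu
  refine ⟨u, Matrix.of fun i j => u i * u j, Matrix.of fun i j => ev k i * u j, ?_⟩
  have hu0 : ∀ i, 0 ≤ u i := fun i => by simp only [hu]; positivity
  have huu : ∀ i, u i * u i = u i := fun i => by simp only [hu]; split <;> norm_num
  have hevu : ∀ i, ev k i ≤ u i := by
    intro i; simp only [hu]; unfold ev
    by_cases hik : i = k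
    · subst hik; simp [hkT']
    · simp [hik]; positivity
  have hev0 : ∀ i, (0:ℝ) ≤ ev k i := fun i => by unfold ev; positivity
  have hevsum' : (∑ i, ev k i) = 1 := hevsum k
  have husum : (∑ i, u i) = (ρ:ℝ) := by
    simp only [hu]; rw [Finset.sum_ite_mem, Finset.univ_inter]; simp [hTcard]
  refine ⟨?_, ?_, hevsum', husum, hevu, hev0, fun i => huu i, ?_, ?_, ?_, ?_, ?_, ?_, ?_, ?_, ?_, ?_⟩
  · ext i j; simp [Matrix.transpose_apply, mul_comm]
  · ext i j; simp [Matrix.transpose_apply, mul_comm]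
  · intro i; simp only [Matrix.of_apply, ← Finset.mul_sum, hevsum', mul_one]
  · intro j; simp only [Matrix.of_apply, ← Finset.sum_mul, hevsum', one_mul]
  · intro i; simp only [Matrix.of_apply, ← Finset.mul_sum, husum]; ring
  · intro i; simp only [Matrix.of_apply, ← Finset.mul_sum, husum]; ring
  · intro i j
    have h := mul_nonneg (sub_nonneg.mpr (hevu i)) (sub_nonneg.mpr (hevu j))
    simp only [Matrix.of_apply]; nlinarith
  · intro i j
    simp only [Matrix.of_apply]; nlinarith [mul_le_mul_of_nonneg_right (hevu i) (hev0 j)]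
  · intro i j
    simp only [Matrix.of_apply]
    nlinarith [mul_le_mul_of_nonneg_right (hevu i) (hu0 j)]
  · intro i j; exact mul_nonneg (hev0 i) (hev0 j)
  · intro i j; exact mul_nonneg (hev0 i) (hu0 j)
  · intro i j; exact mul_nonneg (hu0 i) (hu0 j)

lemma ip_vertex {n : ℕ} (Q : Matrix (Fin n) (Fin n) ℝ) (k : Fin n) :
    ip Q (Matrix.of fun i j => ev k i * ev k j) = Q k k := by
  unfold ip ev
  simp [mul_ite, Finset.sum_ite_eq']

lemma edge_feasible {n : ℕ} {a b : Fin n} (hab : a ≠ b) {ρ : ℕ} (hρ : 2 ≤ ρ) :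
    ∃ u U R, R1Feasible ρ (fun i => (ev a i + ev b i)/2) u
      (Matrix.of fun i j => (ev a i * ev b j + ev b i * ev a j)/2) U R := by
  have hr : (2:ℝ) ≤ (ρ:ℝ) := by exact_mod_cast hρ
  refine ⟨fun i => (ρ:ℝ)/2 * (ev a i + ev b i),
    Matrix.of fun i j => (ρ:ℝ)/2 * (ev a i * ev a j + ev b i * ev b j)
      + (ρ:ℝ)*((ρ:ℝ)-1)/2 * (ev a i * ev b j + ev b i * ev a j),
    Matrix.of fun i j => (ρ:ℝ)/4 * ((ev a i + ev b i) * (ev a j + ev b j)), ?_⟩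
  refine ⟨?_, ?_, ?_, ?_, ?_, ?_, ?_, ?_, ?_, ?_, ?_, ?_, ?_, ?_, ?_, ?_, ?_⟩
  · ext i j; simp [Matrix.transpose_apply]; ring
  · ext i j; simp [Matrix.transpose_apply]; ring
  · simp only [← Finset.sum_div, Finset.sum_add_distrib, hevsum]; norm_num
  · simp only [← Finset.mul_sum, Finset.sum_add_distrib, hevsum]; ring
  · intro i
    rcases eq_or_ne i a with h|h <;> rcases eq_or_ne i b with h'|h' <;>
      simp_all [ev, -Nat.ofNat_le_cast] <;> nlinarith
  · intro i; unfold ev; positivity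
  · intro i
    rcases eq_or_ne i a with h|h <;> rcases eq_or_ne i b with h'|h' <;>
      simp_all [ev, -Nat.ofNat_le_cast]
  · intro i
    simp only [Matrix.of_apply, ← Finset.sum_div, Finset.sum_add_distrib,
      ← Finset.mul_sum, hevsum]; ring
  · intro j
    simp only [Matrix.of_apply, ← Finset.mul_sum, ← Finset.sum_mul,
      Finset.sum_add_distrib, hevsum]; ring
  · intro i
    simp only [Matrix.of_apply, ← Finset.mul_sum, Finset.sum_add_distrib, hevsum]; ring
  · intro i
    simp only [Matrix.of_apply, ← Finset.mul_sum, Finset.sum_add_distrib, hevsum,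
      Finset.sum_add_distrib]
    ring
  · intro i j
    rcases eq_or_ne i a with h|h <;> rcases eq_or_ne i b with h'|h' <;>
      rcases eq_or_ne j a with g|g <;> rcases eq_or_ne j b with g'|g' <;>
      simp_all [ev, -Nat.ofNat_le_cast] <;> nlinarith
  · intro i j
    rcases eq_or_ne i a with h|h <;> rcases eq_or_ne i b with h'|h' <;>
      rcases eq_or_ne j a with g|g <;> rcases eq_or_ne j b with g'|g' <;>
      simp_all [ev, -Nat.ofNat_le_cast] <;> nlinarith
  · intro i j
    rcases eq_or_ne i a with h|h <;> rcases eq_or_ne i b with h'|h' <;>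
      rcases eq_or_ne j a with g|g <;> rcases eq_or_ne j b with g'|g' <;>
      simp_all [ev, -Nat.ofNat_le_cast] <;> nlinarith
  · intro i j
    rcases eq_or_ne i a with h|h <;> rcases eq_or_ne i b with h'|h' <;>
      rcases eq_or_ne j a with g|g <;> rcases eq_or_ne j b with g'|g' <;>
      simp_all [ev, -Nat.ofNat_le_cast] <;> nlinarith
  · intro i j
    rcases eq_or_ne i a with h|h <;> rcases eq_or_ne i b with h'|h' <;>
      rcases eq_or_ne j a with g|g <;> rcases eq_or_ne j b with g'|g' <;>
      simp_all [ev, -Nat.ofNat_le_cast] <;> nlinarith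
  · intro i j
    rcases eq_or_ne i a with h|h <;> rcases eq_or_ne i b with h'|h' <;>
      rcases eq_or_ne j a with g|g <;> rcases eq_or_ne j b with g'|g' <;>
      simp_all [ev, -Nat.ofNat_le_cast] <;> nlinarith

lemma sum_rank1 {n : ℕ} (Q : Matrix (Fin n) (Fin n) ℝ) (a c : Fin n) :
    (∑ i, ∑ j, Q i j * (ev a i * ev c j)) = Q a c := by
  unfold ev; simp [mul_ite, Finset.sum_ite_eq']

lemma ip_edge {n : ℕ} (Q : Matrix (Fin n) (Fin n) ℝ) (a b : Fin n) :
    ip Q (Matrix.of fun i j => (ev a i * ev b j + ev b i * ev a j)/2)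
      = (Q a b + Q b a)/2 := by
  unfold ip
  have h : ∀ i j : Fin n, Q i j * ((ev a i * ev b j + ev b i * ev a j)/2)
       = Q i j * (ev a i * ev b j) / 2 + Q i j * (ev b i * ev a j) / 2 := fun i j => by ring
  simp_rw [Matrix.of_apply, h, Finset.sum_add_distrib, ← Finset.sum_div, sum_rank1]; ring

lemma ev_mem_sparseF {n ρ : ℕ} (h1 : 1 ≤ ρ) (k : Fin n) : ev k ∈ sparseF n ρ := by
  refine ⟨⟨by simp [ev], fun i => by unfold ev; positivity⟩, ?_⟩
  have h : {i | ev k i ≠ 0} = {k} := by ext i; simp [ev]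
  unfold sparsity
  rw [h, Set.ncard_singleton]; exact h1

lemma quad_ev {n : ℕ} (Q : Matrix (Fin n) (Fin n) ℝ) (k : Fin n) :
    quadForm Q (ev k) = Q k k := by
  unfold quadForm ev dotProduct Matrix.mulVec dotProduct
  simp [mul_ite, ite_mul, Finset.sum_ite_eq']

lemma sparse_one {n : ℕ} {x : Fin n → ℝ} (hx : x ∈ sparseF n 1) : ∃ k, x = ev k := by
  obtain ⟨⟨hx1, hx0⟩, hsp⟩ := hx
  have hne : ∃ k, x k ≠ 0 := by
    by_contra h; push_neg at h
    rw [Finset.sum_congr rfl (fun i _ => h i)] at hx1; simp at hx1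
  obtain ⟨k, hk⟩ := hne
  have hzero : ∀ j, j ≠ k → x j = 0 := by
    intro j hjk
    by_contra hj
    have hsub : ({j, k} : Set (Fin n)) ⊆ {i | x i ≠ 0} := by
      intro i hi; rcases hi with hi|hi <;> subst hi <;> assumption
    have h2 : ({j, k} : Set (Fin n)).ncard = 2 := Set.ncard_pair hjk
    have := Set.ncard_le_ncard hsub (Set.toFinite _)
    unfold sparsity at hsp; omega
  have hxk : x k = 1 := by
    rw [← hx1, Finset.sum_eq_single k (fun j _ hj => hzero j hj) (by simp)]
  refine ⟨k, funext fun i => ?_⟩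
  unfold ev
  by_cases h : i = k
  · subst h; simp [hxk]
  · simp [h, hzero i h]

theorem stmt6 {n : ℕ} (hn : 0 < n) (Q : Matrix (Fin n) (Fin n) ℝ) (hQ : Q.IsSymm)
    (ρ : ℕ) (h1 : 1 ≤ ρ) (h2 : ρ ≤ n) :
    ellR1 Q ρ = ellSparse Q ρ ↔
      ρ = 1 ∨
        ((Finset.univ.filter fun p : Fin n × Fin n => p.1 ≤ p.2).inf'
        (Finset.filter_nonempty_iff.mpr ⟨(⟨0, hn⟩, ⟨0, hn⟩), Finset.mem_univ _, le_rfl⟩)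
        (fun p => Q p.1 p.2)) =
          (Finset.univ.inf' (Finset.univ_nonempty_iff.mpr ⟨⟨0, hn⟩⟩) fun k => Q k k) := by
  set m := ((Finset.univ.filter fun p : Fin n × Fin n => p.1 ≤ p.2).inf'
        (Finset.filter_nonempty_iff.mpr ⟨(⟨0, hn⟩, ⟨0, hn⟩), Finset.mem_univ _, le_rfl⟩)
        (fun p => Q p.1 p.2)) with hmdef
  set d := (Finset.univ.inf' (Finset.univ_nonempty_iff.mpr ⟨⟨0, hn⟩⟩) fun k => Q k k) with hddef
  have hm_le : ∀ i j, m ≤ Q i j := by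
    intro i j
    rcases le_total i j with h|h
    · exact Finset.inf'_le (fun p : Fin n × Fin n => Q p.1 p.2)
        (Finset.mem_filter.mpr ⟨Finset.mem_univ (i, j), h⟩)
    · have hle : m ≤ Q j i := Finset.inf'_le (fun p : Fin n × Fin n => Q p.1 p.2)
        (Finset.mem_filter.mpr ⟨Finset.mem_univ (j, i), h⟩)
      rwa [hQ.apply i j] at hle
  have hd_le : ∀ k, d ≤ Q k k := fun k =>
    Finset.inf'_le (fun k : Fin n => Q k k) (Finset.mem_univ k)
  have hmd : m ≤ d := Finset.le_inf' _ _ fun k _ => hm_le k k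
  obtain ⟨k₀, -, hk₀⟩ := Finset.exists_mem_eq_inf'
    (Finset.univ_nonempty_iff.mpr ⟨⟨0, hn⟩⟩) (fun k : Fin n => Q k k)
  rw [← hddef] at hk₀
  -- basic sInf facts
  have hBddR1 : BddBelow ((fun p => ip Q p.2) '' FR1proj n ρ) := by
    refine ⟨m, ?_⟩
    rintro y ⟨p, ⟨u, U, R, hfeas⟩, rfl⟩
    exact ip_ge hm_le hfeas
  have hBddS : BddBelow (quadForm Q '' sparseF n ρ) := by
    refine ⟨m, ?_⟩
    rintro y ⟨x, hx, rfl⟩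
    exact quadForm_ge_c hm_le hx.1
  have hvertmem : ∀ k : Fin n, (ev k, Matrix.of fun i j => ev k i * ev k j) ∈ FR1proj n ρ := by
    intro k
    obtain ⟨u, U, R, hfeas⟩ := vertex_feasible k h1 h2
    exact ⟨u, U, R, hfeas⟩
  have hneR1 : ((fun p => ip Q p.2) '' FR1proj n ρ).Nonempty :=
    ⟨_, ⟨_, hvertmem k₀, rfl⟩⟩
  have hneS : (quadForm Q '' sparseF n ρ).Nonempty :=
    ⟨_, ⟨ev k₀, ev_mem_sparseF h1 k₀, rfl⟩⟩
  have hvert : ∀ k : Fin n, ellR1 Q ρ ≤ Q k k := by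
    intro k
    calc ellR1 Q ρ ≤ ip Q (Matrix.of fun i j => ev k i * ev k j) :=
          csInf_le hBddR1 ⟨_, hvertmem k, rfl⟩
    _ = Q k k := ip_vertex Q k
  have hSvert : ∀ k : Fin n, ellSparse Q ρ ≤ Q k k := by
    intro k
    calc ellSparse Q ρ ≤ quadForm Q (ev k) :=
          csInf_le hBddS ⟨ev k, ev_mem_sparseF h1 k, rfl⟩
    _ = Q k k := quad_ev Q k
  have hR1low : m ≤ ellR1 Q ρ := by
    apply le_csInf hneR1
    rintro y ⟨p, ⟨u, U, R, hfeas⟩, rfl⟩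
    exact ip_ge hm_le hfeas
  constructor
  · intro heq
    by_contra hcon
    push_neg at hcon
    obtain ⟨hρ1, hmd_ne⟩ := hcon
    have hρ2 : 2 ≤ ρ := by omega
    have hmlt : m < d := lt_of_le_of_ne hmd hmd_ne
    have hPne : (Finset.univ.filter fun p : Fin n × Fin n => p.1 ≤ p.2).Nonempty :=
      Finset.filter_nonempty_iff.mpr ⟨(⟨0, hn⟩, ⟨0, hn⟩), Finset.mem_univ _, le_rfl⟩
    obtain ⟨p0, -, hp0'⟩ := Finset.exists_mem_eq_inf' hPne (fun p : Fin n × Fin n => Q p.1 p.2)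
    have hp0 : m = Q p0.1 p0.2 := hmdef.trans hp0'
    set a := p0.1 with ha
    set b := p0.2 with hb
    have hab : a ≠ b := by
      intro h
      rw [← h] at hp0
      rw [hp0] at hmlt
      exact absurd (hd_le a) (not_le.mpr hmlt)
    have hedge : ellR1 Q ρ ≤ m := by
      obtain ⟨u, U, R, hfeas⟩ := edge_feasible hab hρ2
      have hmem : ((fun i => (ev a i + ev b i)/2,
          Matrix.of fun i j => (ev a i * ev b j + ev b i * ev a j)/2) :
          (Fin n → ℝ) × Matrix (Fin n) (Fin n) ℝ) ∈ FR1proj n ρ := ⟨u, U, R, hfeas⟩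
      calc ellR1 Q ρ ≤ ip Q (Matrix.of fun i j => (ev a i * ev b j + ev b i * ev a j)/2) :=
            csInf_le hBddR1 ⟨_, hmem, rfl⟩
      _ = (Q a b + Q b a)/2 := ip_edge Q a b
      _ = m := by rw [hQ.apply a b, hp0]; ring
    have hstrict : m + (d - m)/n ≤ ellSparse Q ρ := by
      apply le_csInf hneS
      rintro y ⟨x, hx, rfl⟩
      exact quadForm_ge_strict hn hm_le hd_le hmd hx.1
    have hpos : 0 < (d - m)/n := div_pos (by linarith) (by exact_mod_cast hn)
    rw [heq] at hedge
    linarith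
  · rintro (hρ1 | hmd_eq)
    · subst hρ1
      have hR1d : d ≤ ellR1 Q 1 := by
        apply le_csInf hneR1
        rintro y ⟨p, ⟨u, U, R, hfeas⟩, rfl⟩
        exact ip_ge_diag hd_le hfeas
      have hSd : d ≤ ellSparse Q 1 := by
        apply le_csInf hneS
        rintro y ⟨x, hx, rfl⟩
        obtain ⟨k, rfl⟩ := sparse_one hx
        rw [quad_ev]; exact hd_le k
      have h3 := hvert k₀
      have h4 := hSvert k₀
      rw [← hk₀] at h3 h4
      linarith
    · have h3 : ellR1 Q ρ ≤ m := by
        have := hvert k₀; rw [← hk₀, ← hmd_eq] at this; exact this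
      have h4 : ellSparse Q ρ ≤ m := by
        have := hSvert k₀; rw [← hk₀, ← hmd_eq] at this; exact this
      have hSlow : m ≤ ellSparse Q ρ := by
        apply le_csInf hneS
        rintro y ⟨x, hx, rfl⟩
        exact quadForm_ge_c hm_le hx.1
      linarith

end
end

section
/- Let Q ∈ S^n. If Q is positive semidefinite, then inf{⟨Q,X⟩ : (x,X) ∈ F^{R2}} = ℓ(Q). If Q is not positive semidefinite, then this infimum is −∞, i.e., for every M ∈ ℝ there exists (x,X) ∈ F^{R2} with ⟨Q,X⟩ < M. -/
open Matrix BigOperators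

noncomputable section

def FR2 (n : ℕ) : Set ((Fin n → ℝ) × Matrix (Fin n) (Fin n) ℝ) :=
  {p | p.2.IsSymm ∧ (∑ i, p.1 i) = 1 ∧ (∀ i, 0 ≤ p.1 i) ∧
    (p.2 - Matrix.vecMulVec p.1 p.1).PosSemidef}

-- ip Q P = trace (Q * Pᵀ)
lemma ip_eq_trace {n : ℕ} (Q P : Matrix (Fin n) (Fin n) ℝ) :
    ip Q P = Matrix.trace (Q * Pᵀ) := by
  simp [ip, Matrix.trace, Matrix.mul_apply, Matrix.diag]

lemma psd_diag_nonneg {n : ℕ} {M : Matrix (Fin n) (Fin n) ℝ} (hM : M.PosSemidef) (i : Fin n) :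
    0 ≤ M i i := by
  have := hM.dotProduct_mulVec_nonneg (Pi.single i 1)
  simpa [Matrix.mulVec_single, single_dotProduct] using this

lemma psd_trace_nonneg {n : ℕ} {M : Matrix (Fin n) (Fin n) ℝ} (hM : M.PosSemidef) :
    0 ≤ Matrix.trace M := by
  exact Finset.sum_nonneg fun i _ => psd_diag_nonneg hM i

open scoped MatrixOrder in
lemma ip_nonneg {n : ℕ} {Q P : Matrix (Fin n) (Fin n) ℝ}
    (hQ : Q.PosSemidef) (hP : P.PosSemidef) : 0 ≤ ip Q P := by
  have hPt : Pᵀ = P := by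
    have := hP.1; simpa [Matrix.IsHermitian] using this
  rw [ip_eq_trace, hPt]
  set S := CFC.sqrt Q with hS
  have hSsym : Sᴴ = S := (CFC.sqrt_nonneg Q).posSemidef.1
  have hQS : S * S = Q := CFC.sqrt_mul_sqrt_self Q hQ.nonneg
  have h1 : Q * P = S * (S * P) := by rw [← hQS, mul_assoc]
  rw [h1, Matrix.trace_mul_comm]
  have hpsd : (Sᴴ * P * S).PosSemidef := hP.conjTranspose_mul_mul_same S
  rw [hSsym] at hpsd
  exact psd_trace_nonneg hpsd

lemma ip_vecMulVec {n : ℕ} (Q : Matrix (Fin n) (Fin n) ℝ) (v : Fin n → ℝ) :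
    ip Q (Matrix.vecMulVec v v) = quadForm Q v := by
  simp only [ip, Matrix.vecMulVec_apply, quadForm, dotProduct, Matrix.mulVec,
    Finset.mul_sum]
  apply Finset.sum_congr rfl; intro i _
  apply Finset.sum_congr rfl; intro j _
  ring

lemma ip_sub {n : ℕ} (Q A B : Matrix (Fin n) (Fin n) ℝ) :
    ip Q (A - B) = ip Q A - ip Q B := by
  simp [ip, Matrix.sub_apply, mul_sub, Finset.sum_sub_distrib]

lemma ip_smul {n : ℕ} (Q : Matrix (Fin n) (Fin n) ℝ) (t : ℝ) (A : Matrix (Fin n) (Fin n) ℝ) :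
    ip Q (t • A) = t * ip Q A := by
  simp [ip, Finset.mul_sum, mul_left_comm]

lemma ip_add {n : ℕ} (Q A B : Matrix (Fin n) (Fin n) ℝ) :
    ip Q (A + B) = ip Q A + ip Q B := by
  simp [ip, Matrix.add_apply, mul_add, Finset.sum_add_distrib]

lemma psd_smul {n : ℕ} {t : ℝ} (ht : 0 ≤ t) {A : Matrix (Fin n) (Fin n) ℝ}
    (hA : A.PosSemidef) : (t • A).PosSemidef := by
  refine Matrix.PosSemidef.of_dotProduct_mulVec_nonneg ?_ ?_
  · show (t • A)ᴴ = t • A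
    rw [Matrix.conjTranspose_smul, star_trivial, hA.1]
  · intro x
    rw [Matrix.smul_mulVec, dotProduct_smul, smul_eq_mul]
    exact mul_nonneg ht (hA.dotProduct_mulVec_nonneg x)

lemma vecMulVec_symm {n : ℕ} (v : Fin n → ℝ) : (Matrix.vecMulVec v v).IsSymm := by
  ext i j; simp [Matrix.vecMulVec_apply, Matrix.transpose_apply, mul_comm]

lemma vecMulVec_psd {n : ℕ} (v : Fin n → ℝ) : (Matrix.vecMulVec v v).PosSemidef := by
  refine Matrix.PosSemidef.of_dotProduct_mulVec_nonneg ?_ ?_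
  · exact vecMulVec_symm v
  · intro x
    have : star x ⬝ᵥ (Matrix.vecMulVec v v) *ᵥ x = (v ⬝ᵥ x) ^ 2 := by
      simp [dotProduct, Matrix.mulVec, Matrix.vecMulVec_apply, Finset.mul_sum,
        Finset.sum_mul, sq]
      rw [Finset.sum_comm]
      apply Finset.sum_congr rfl; intro i _
      apply Finset.sum_congr rfl; intro j _
      ring
    rw [this]
    positivity

theorem stmt7 {n : ℕ} (hn : 0 < n) (Q : Matrix (Fin n) (Fin n) ℝ) (hQ : Q.IsSymm) :
    (Q.PosSemidef → sInf ((fun p => ip Q p.2) '' FR2 n) = ell Q) ∧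
    (¬Q.PosSemidef → ∀ M : ℝ, ∃ p ∈ FR2 n, ip Q p.2 < M) := by
  classical
  set i0 : Fin n := ⟨0, hn⟩
  set x0 : Fin n → ℝ := Pi.single i0 1 with hx0def
  have hx0 : x0 ∈ simplexF n := by
    constructor
    · simp [hx0def, Finset.sum_pi_single']
    · intro i
      rcases eq_or_ne i i0 with h | h <;> simp [hx0def, Pi.single_apply, h]
  have hmem : ∀ x ∈ simplexF n, (x, Matrix.vecMulVec x x) ∈ FR2 n := by
    intro x hx
    refine ⟨vecMulVec_symm x, hx.1, hx.2, ?_⟩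
    simpa [sub_self] using (Matrix.PosSemidef.zero :
      (0 : Matrix (Fin n) (Fin n) ℝ).PosSemidef)
  constructor
  · intro hpsd
    have hne2 : (quadForm Q '' simplexF n).Nonempty := ⟨_, ⟨x0, hx0, rfl⟩⟩
    have hsub : quadForm Q '' simplexF n ⊆ (fun p => ip Q p.2) '' FR2 n := by
      rintro y ⟨x, hx, rfl⟩
      exact ⟨(x, Matrix.vecMulVec x x), hmem x hx, ip_vecMulVec Q x⟩
    have hbdd2 : BddBelow (quadForm Q '' simplexF n) := by
      refine ⟨0, ?_⟩
      rintro y ⟨x, hx, rfl⟩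
      simpa [quadForm] using hpsd.dotProduct_mulVec_nonneg x
    have hb : ∀ y ∈ (fun p => ip Q p.2) '' FR2 n, ell Q ≤ y := by
      rintro y ⟨⟨x, X⟩, ⟨hsym, hsum, hpos, hXpsd⟩, rfl⟩
      have h1 : ip Q X = ip Q (X - Matrix.vecMulVec x x) + quadForm Q x := by
        rw [ip_sub, ip_vecMulVec]; ring
      have h2 : 0 ≤ ip Q (X - Matrix.vecMulVec x x) := ip_nonneg hpsd hXpsd
      have h3 : ell Q ≤ quadForm Q x := csInf_le hbdd2 ⟨x, ⟨hsum, hpos⟩, rfl⟩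
      simp only
      linarith
    have hbdd1 : BddBelow ((fun p => ip Q p.2) '' FR2 n) := ⟨ell Q, hb⟩
    refine le_antisymm (csInf_le_csInf hbdd1 hne2 hsub) (le_csInf (hne2.mono hsub) hb)
  · intro hnpsd M
    have hherm : Q.IsHermitian := by
      show Qᴴ = Q
      ext i j
      simp [Matrix.conjTranspose_apply]
      exact hQ.apply i j
    have hv : ∃ v, v ⬝ᵥ Q *ᵥ v < 0 := by
      by_contra h
      push_neg at h
      exact hnpsd (Matrix.PosSemidef.of_dotProduct_mulVec_nonneg hherm fun x => by simpa using h x)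
    obtain ⟨v, hvneg⟩ := hv
    set c : ℝ := v ⬝ᵥ Q *ᵥ v with hcdef
    set a : ℝ := quadForm Q x0 with hadef
    set t : ℝ := max 1 ((a - M) / (-c) + 1) with htdef
    have ht0 : (0:ℝ) ≤ t := le_trans zero_le_one (le_max_left _ _)
    have htgt : (a - M) / (-c) < t := lt_of_lt_of_le (lt_add_one _) (le_max_right _ _)
    have hcpos : 0 < -c := by linarith
    have h5 : a - M < t * (-c) := (div_lt_iff₀ hcpos).mp htgt
    refine ⟨(x0, Matrix.vecMulVec x0 x0 + t • Matrix.vecMulVec v v), ⟨?_, hx0.1, hx0.2, ?_⟩, ?_⟩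
    · refine (vecMulVec_symm x0).add ?_
      show (t • Matrix.vecMulVec v v)ᵀ = t • Matrix.vecMulVec v v
      rw [Matrix.transpose_smul, (vecMulVec_symm v).eq]
    · show (Matrix.vecMulVec x0 x0 + t • Matrix.vecMulVec v v
        - Matrix.vecMulVec x0 x0).PosSemidef
      rw [add_sub_cancel_left]
      exact psd_smul ht0 (vecMulVec_psd v)
    · show ip Q (Matrix.vecMulVec x0 x0 + t • Matrix.vecMulVec v v) < M
      have hval : ip Q (Matrix.vecMulVec x0 x0 + t • Matrix.vecMulVec v v) = a + t * c := by
        rw [ip_add, ip_smul, ip_vecMulVec, ip_vecMulVec]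
        rfl
      rw [hval]
      nlinarith

end
end

section
/- For each ρ ∈ {1,2,…,n}, F^{R2}_ρ = F^{R2}, i.e., the projection of the Shor-relaxation feasible set of the sparse StQP onto (x,X) equals the Shor-relaxation feasible set of the unconstrained standard quadratic program. -/
open Matrix BigOperators

noncomputable section

def bigMat {n : ℕ} (x u : Fin n → ℝ) (X U R : Matrix (Fin n) (Fin n) ℝ) :
    Matrix (Unit ⊕ (Fin n ⊕ Fin n)) (Unit ⊕ (Fin n ⊕ Fin n)) ℝ :=
  Matrix.fromBlocks (Matrix.of fun _ _ => (1 : ℝ))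
    (Matrix.of fun (_ : Unit) j => Sum.elim x u j)
    (Matrix.of fun i (_ : Unit) => Sum.elim x u i)
    (Matrix.fromBlocks X R Rᵀ U)

lemma bigMat_quadform {n : ℕ} (x u : Fin n → ℝ) (X U R : Matrix (Fin n) (Fin n) ℝ)
    (z : Unit ⊕ (Fin n ⊕ Fin n) → ℝ) :
    dotProduct (star z) ((bigMat x u X U R).mulVec z) =
      z (Sum.inl ()) * z (Sum.inl ())
      + z (Sum.inl ()) * (∑ i, x i * z (Sum.inr (Sum.inl i)))
      + z (Sum.inl ()) * (∑ i, u i * z (Sum.inr (Sum.inr i)))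
      + (∑ i, z (Sum.inr (Sum.inl i)) * (x i * z (Sum.inl ())
          + ((∑ j, X i j * z (Sum.inr (Sum.inl j))) + ∑ j, R i j * z (Sum.inr (Sum.inr j)))))
      + (∑ i, z (Sum.inr (Sum.inr i)) * (u i * z (Sum.inl ())
          + ((∑ j, R j i * z (Sum.inr (Sum.inl j))) + ∑ j, U i j * z (Sum.inr (Sum.inr j))))) := by
  simp [bigMat, dotProduct, mulVec, Fintype.sum_sum_type, Matrix.fromBlocks]
  ring

lemma quad_sub {n : ℕ} (x v : Fin n → ℝ) (X : Matrix (Fin n) (Fin n) ℝ) :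
    v ⬝ᵥ ((X - Matrix.vecMulVec x x).mulVec v)
      = (∑ i, v i * ∑ j, X i j * v j) - (∑ i, x i * v i) * (∑ i, x i * v i) := by
  have hA' : ∑ i, v i * x i = ∑ i, x i * v i :=
    Finset.sum_congr rfl fun i _ => mul_comm _ _
  have hub : ∀ i, ∑ j, (X i j - x i * x j) * v j
      = (∑ j, X i j * v j) - x i * (∑ i, x i * v i) := by
    intro i
    rw [Finset.mul_sum, ← Finset.sum_sub_distrib]
    exact Finset.sum_congr rfl fun j _ => by ring
  have : v ⬝ᵥ ((X - Matrix.vecMulVec x x).mulVec v)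
      = ∑ i, v i * ((∑ j, X i j * v j) - x i * (∑ i, x i * v i)) := by
    refine Finset.sum_congr rfl fun i _ => ?_
    rw [show ((X - Matrix.vecMulVec x x).mulVec v) i
        = ∑ j, (X i j - x i * x j) * v j from rfl, hub i]
  rw [this, show ∑ i, v i * ((∑ j, X i j * v j) - x i * (∑ i, x i * v i))
      = ∑ i, (v i * (∑ j, X i j * v j) - v i * x i * (∑ i, x i * v i)) from
    Finset.sum_congr rfl fun i _ => by ring, Finset.sum_sub_distrib,
    ← Finset.sum_mul, hA']

def sfun (n ρ : ℕ) (k j : Fin n) : ℝ := if ((j - k : Fin n) : ℕ) < ρ then 1 else 0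

lemma sfun_nonneg (n ρ : ℕ) (k j : Fin n) : 0 ≤ sfun n ρ k j := by
  unfold sfun; split <;> norm_num

lemma sfun_sq (n ρ : ℕ) (k j : Fin n) : sfun n ρ k j * sfun n ρ k j = sfun n ρ k j := by
  unfold sfun; split <;> norm_num

lemma sfun_self {n ρ : ℕ} (h1 : 1 ≤ ρ) (k : Fin n) : sfun n ρ k k = 1 := by
  haveI : NeZero n := ⟨Nat.pos_of_ne_zero (fun h => by subst h; exact k.elim0) |>.ne'⟩
  unfold sfun
  rw [sub_self]
  have : 0 < ρ := h1
  simp [this]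

lemma sfun_sum {n ρ : ℕ} (h2 : ρ ≤ n) (k : Fin n) : ∑ j, sfun n ρ k j = (ρ : ℝ) := by
  haveI : NeZero n := ⟨Nat.pos_of_ne_zero (fun h => by subst h; exact k.elim0) |>.ne'⟩
  unfold sfun
  rw [show (∑ j : Fin n, if ((j - k : Fin n) : ℕ) < ρ then (1:ℝ) else 0)
      = ∑ d : Fin n, if (d : ℕ) < ρ then (1:ℝ) else 0 from
    Fintype.sum_equiv (Equiv.subRight k) _ _ (fun j => rfl)]
  rw [Fin.sum_univ_eq_sum_range (fun m => if m < ρ then (1:ℝ) else 0)]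
  rw [Finset.sum_congr rfl (fun m _ => by
    simp only [← Finset.mem_range (n := ρ)] : ∀ m ∈ Finset.range n,
      (if m < ρ then (1:ℝ) else 0) = if m ∈ Finset.range ρ then 1 else 0)]
  rw [Finset.sum_ite_mem]
  rw [Finset.inter_eq_right.mpr (Finset.range_subset_range.mpr h2)]
  simp

noncomputable def uvec (n ρ : ℕ) (x : Fin n → ℝ) : Fin n → ℝ :=
  fun j => ∑ k, x k * sfun n ρ k j

noncomputable def Umat (n ρ : ℕ) (x : Fin n → ℝ) : Matrix (Fin n) (Fin n) ℝ :=
  Matrix.of fun i j => ∑ k, x k * sfun n ρ k i * sfun n ρ k j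

noncomputable def Rmat (n ρ : ℕ) (x : Fin n → ℝ) : Matrix (Fin n) (Fin n) ℝ :=
  Matrix.of fun i j => x i * uvec n ρ x j

lemma uvec_sum {n ρ : ℕ} (h2 : ρ ≤ n) (x : Fin n → ℝ) (hx : ∑ i, x i = 1) : ∑ j, uvec n ρ x j = (ρ : ℝ) := by
  unfold uvec
  rw [Finset.sum_comm]
  rw [Finset.sum_congr rfl (fun k _ => by
    rw [← Finset.mul_sum, sfun_sum h2] : ∀ k ∈ Finset.univ,
      ∑ j, x k * sfun n ρ k j = x k * (ρ : ℝ))]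
  rw [← Finset.sum_mul, hx, one_mul]

lemma Umat_diag {n ρ : ℕ} (x : Fin n → ℝ) (i : Fin n) : Umat n ρ x i i = uvec n ρ x i := by
  unfold Umat uvec
  rw [Matrix.of_apply]
  exact Finset.sum_congr rfl fun k _ => by rw [mul_assoc, sfun_sq]

lemma Umat_symm {n ρ : ℕ} (x : Fin n → ℝ) : (Umat n ρ x).IsSymm := by
  ext i j
  rw [Matrix.transpose_apply]
  unfold Umat
  rw [Matrix.of_apply, Matrix.of_apply]
  exact Finset.sum_congr rfl fun k _ => by ring

lemma uvec_ge {n ρ : ℕ} (h1 : 1 ≤ ρ) (x : Fin n → ℝ) (hx : ∀ i, 0 ≤ x i) (i : Fin n) : x i ≤ uvec n ρ x i := by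
  have := Finset.single_le_sum (f := fun k => x k * sfun n ρ k i)
    (fun k _ => mul_nonneg (hx k) (sfun_nonneg n ρ k i)) (Finset.mem_univ i)
  simp only [sfun_self h1, mul_one] at this
  exact this

lemma bigMat_herm {n ρ : ℕ} (x : Fin n → ℝ) (X : Matrix (Fin n) (Fin n) ℝ)
    (hX : X.IsSymm) :
    (bigMat x (uvec n ρ x) X (Umat n ρ x) (Rmat n ρ x)).IsHermitian := by
  have hU := Umat_symm (ρ := ρ) x
  ext i j
  rcases i with i | i | i <;> rcases j with j | j | j <;>
    simp [bigMat, Matrix.fromBlocks, Matrix.conjTranspose_apply, hX.apply, hU.apply]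

lemma key_ineq {n ρ : ℕ} (x : Fin n → ℝ) (X : Matrix (Fin n) (Fin n) ℝ)
    (hx1 : (∑ i, x i) = 1) (hx0 : ∀ i, 0 ≤ x i)
    (hpsd : (X - Matrix.vecMulVec x x).PosSemidef) (c : ℝ) (v w : Fin n → ℝ) :
    0 ≤ c * c + c * (∑ i, x i * v i) + c * (∑ i, uvec n ρ x i * w i)
      + (∑ i, v i * (x i * c + ((∑ j, X i j * v j) + ∑ j, Rmat n ρ x i j * w j)))
      + (∑ i, w i * (uvec n ρ x i * c
          + ((∑ j, Rmat n ρ x j i * v j) + ∑ j, Umat n ρ x i j * w j))) := by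
  set A := ∑ i, x i * v i with hA
  set B := ∑ i, uvec n ρ x i * w i with hB
  set P := ∑ i, v i * ∑ j, X i j * v j with hP
  set W := ∑ i, w i * ∑ j, Umat n ρ x i j * w j with hW
  set t : Fin n → ℝ := fun k => ∑ j, sfun n ρ k j * w j with ht
  -- first block sum
  have st1 : ∀ i, ∑ j, Rmat n ρ x i j * w j = x i * B := by
    intro i
    rw [hB, Finset.mul_sum]
    exact Finset.sum_congr rfl fun j _ => by
      show x i * uvec n ρ x j * w j = _
      ring
  have h_first : ∑ i, v i * (x i * c + ((∑ j, X i j * v j) + ∑ j, Rmat n ρ x i j * w j))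
      = A * c + (P + A * B) := by
    rw [show (∑ i, v i * (x i * c + ((∑ j, X i j * v j) + ∑ j, Rmat n ρ x i j * w j)))
        = ∑ i, ((x i * v i) * c + (v i * (∑ j, X i j * v j) + (x i * v i) * B)) from
      Finset.sum_congr rfl fun i _ => by rw [st1 i]; ring]
    rw [Finset.sum_add_distrib, Finset.sum_add_distrib, ← Finset.sum_mul, ← Finset.sum_mul]
  -- second block sum
  have st2 : ∀ i, ∑ j, Rmat n ρ x j i * v j = uvec n ρ x i * A := by
    intro i
    rw [hA, Finset.mul_sum]
    exact Finset.sum_congr rfl fun j _ => by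
      show x j * uvec n ρ x i * v j = _
      ring
  have h_second : ∑ i, w i * (uvec n ρ x i * c
        + ((∑ j, Rmat n ρ x j i * v j) + ∑ j, Umat n ρ x i j * w j))
      = B * c + (B * A + W) := by
    rw [show (∑ i, w i * (uvec n ρ x i * c
          + ((∑ j, Rmat n ρ x j i * v j) + ∑ j, Umat n ρ x i j * w j)))
        = ∑ i, ((uvec n ρ x i * w i) * c + ((uvec n ρ x i * w i) * A
            + w i * ∑ j, Umat n ρ x i j * w j)) from
      Finset.sum_congr rfl fun i _ => by rw [st2 i]; ring]
    rw [Finset.sum_add_distrib, Finset.sum_add_distrib, ← Finset.sum_mul, ← Finset.sum_mul]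
  -- G1
  have hG1 : ∑ k, x k * t k = B := by
    rw [hB]
    rw [show (∑ i, uvec n ρ x i * w i) = ∑ i, ∑ k, (x k * sfun n ρ k i) * w i from
      Finset.sum_congr rfl fun i _ => by rw [uvec, Finset.sum_mul]]
    rw [Finset.sum_comm]
    exact Finset.sum_congr rfl fun k _ => by
      rw [ht, Finset.mul_sum]
      exact Finset.sum_congr rfl fun j _ => by ring
  -- G2
  have sta : ∀ i, ∑ j, Umat n ρ x i j * w j = ∑ k, (x k * sfun n ρ k i) * t k := by
    intro i
    rw [show (∑ j, Umat n ρ x i j * w j)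
        = ∑ j, ∑ k, (x k * sfun n ρ k i * sfun n ρ k j) * w j from
      Finset.sum_congr rfl fun j _ => by
        show (∑ k, x k * sfun n ρ k i * sfun n ρ k j) * w j = _
        rw [Finset.sum_mul]]
    rw [Finset.sum_comm]
    exact Finset.sum_congr rfl fun k _ => by
      rw [ht, Finset.mul_sum]
      exact Finset.sum_congr rfl fun j _ => by ring
  have hG2 : ∑ k, x k * (t k * t k) = W := by
    rw [hW]
    rw [show (∑ i, w i * ∑ j, Umat n ρ x i j * w j)
        = ∑ i, ∑ k, (x k * t k) * (sfun n ρ k i * w i) from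
      Finset.sum_congr rfl fun i _ => by
        rw [sta i, Finset.mul_sum]
        exact Finset.sum_congr rfl fun k _ => by ring]
    rw [Finset.sum_comm]
    exact Finset.sum_congr rfl fun k _ => by
      rw [← Finset.mul_sum, ht]
      ring
  -- key identity
  have h_key : ∑ k, x k * ((c + A + t k) * (c + A + t k))
      = c*c + 2*c*A + A*A + 2*c*B + 2*A*B + W := by
    rw [show (∑ k, x k * ((c + A + t k) * (c + A + t k)))
        = ∑ k, (x k * ((c+A)*(c+A)) + ((2*(c+A)) * (x k * t k) + x k * (t k * t k))) from
      Finset.sum_congr rfl fun k _ => by ring]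
    rw [Finset.sum_add_distrib, Finset.sum_add_distrib, ← Finset.sum_mul,
      ← Finset.mul_sum, hx1, hG1, hG2]
    ring
  have h_nng : 0 ≤ ∑ k, x k * ((c + A + t k) * (c + A + t k)) :=
    Finset.sum_nonneg fun k _ => mul_nonneg (hx0 k) (mul_self_nonneg _)
  have h_psd : 0 ≤ P - A * A := by
    have hq := hpsd.dotProduct_mulVec_nonneg v
    rwa [show (star v : Fin n → ℝ) = v from star_trivial v, quad_sub, ← hP, ← hA] at hq
  have heq : c * c + c * A + c * B + (A * c + (P + A * B)) + (B * c + (B * A + W))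
      = (P - A * A) + ∑ k, x k * ((c + A + t k) * (c + A + t k)) := by
    rw [h_key]; ring
  rw [h_first, h_second, heq]
  exact add_nonneg h_psd h_nng

lemma dir1 {n : ℕ} (x u : Fin n → ℝ) (X U R : Matrix (Fin n) (Fin n) ℝ)
    (hX : X.IsSymm) (hPSD : (bigMat x u X U R).PosSemidef) :
    (X - Matrix.vecMulVec x x).PosSemidef := by
  refine Matrix.PosSemidef.of_dotProduct_mulVec_nonneg ?_ ?_
  · ext i j
    simp [Matrix.conjTranspose_apply, Matrix.sub_apply, Matrix.vecMulVec_apply,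
      mul_comm, hX.apply i j]
  · intro v
    set A := ∑ i, x i * v i with hA
    have hA' : ∑ i, v i * x i = A := by
      rw [hA]; exact Finset.sum_congr rfl fun i _ => mul_comm _ _
    have h := hPSD.dotProduct_mulVec_nonneg (Sum.elim (fun _ => -A) (Sum.elim v 0))
    rw [bigMat_quadform] at h
    simp only [Sum.elim_inl, Sum.elim_inr, Pi.zero_apply, mul_zero, zero_mul,
      add_zero, Finset.sum_const_zero, mul_neg, neg_mul, neg_neg, ← hA] at h
    have e1 : ∑ i, v i * (-(x i * A) + ∑ j, X i j * v j)
        = -(A * A) + ∑ i, v i * ∑ j, X i j * v j := by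
      rw [show ∑ i, v i * (-(x i * A) + ∑ j, X i j * v j)
          = ∑ i, (v i * -(x i * A) + v i * ∑ j, X i j * v j) from
        Finset.sum_congr rfl fun i _ => mul_add _ _ _]
      rw [Finset.sum_add_distrib]
      congr 1
      rw [← hA']
      rw [Finset.sum_mul]
      rw [← Finset.sum_neg_distrib]
      exact Finset.sum_congr rfl fun i _ => by ring
    have e2 : v ⬝ᵥ ((X - Matrix.vecMulVec x x).mulVec v)
        = (∑ i, v i * ∑ j, X i j * v j) - A * A := by
      have hub : ∀ i, ∑ j, (X i j - x i * x j) * v j = (∑ j, X i j * v j) - x i * A := by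
        intro i
        rw [hA, Finset.mul_sum, ← Finset.sum_sub_distrib]
        exact Finset.sum_congr rfl fun j _ => by ring
      have : v ⬝ᵥ ((X - Matrix.vecMulVec x x).mulVec v)
          = ∑ i, v i * ((∑ j, X i j * v j) - x i * A) := by
        refine Finset.sum_congr rfl fun i _ => ?_
        rw [show ((X - Matrix.vecMulVec x x).mulVec v) i
            = ∑ j, (X i j - x i * x j) * v j from rfl, hub i]
      rw [this, show ∑ i, v i * ((∑ j, X i j * v j) - x i * A)
          = ∑ i, (v i * (∑ j, X i j * v j) - v i * x i * A) from
        Finset.sum_congr rfl fun i _ => by ring, Finset.sum_sub_distrib,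
        ← Finset.sum_mul, hA']
    rw [e1] at h
    rw [show (star v : Fin n → ℝ) = v from star_trivial v, e2]
    linarith

def R2Feasible {n : ℕ} (ρ : ℕ) (x u : Fin n → ℝ)
    (X U R : Matrix (Fin n) (Fin n) ℝ) : Prop :=
  X.IsSymm ∧ U.IsSymm ∧
  (∑ i, x i) = 1 ∧ (∑ i, u i) = (ρ : ℝ) ∧
  (∀ i, U i i = u i) ∧
  (∀ i, 0 ≤ x i) ∧ (∀ i, x i ≤ u i) ∧
  (bigMat x u X U R).PosSemidef

def FR2proj (n ρ : ℕ) : Set ((Fin n → ℝ) × Matrix (Fin n) (Fin n) ℝ) :=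
  {p | ∃ u U R, R2Feasible ρ p.1 u p.2 U R}

theorem stmt8 {n : ℕ} (hn : 0 < n) (ρ : ℕ) (h1 : 1 ≤ ρ) (h2 : ρ ≤ n) :
    FR2proj n ρ = FR2 n := by
  ext p
  obtain ⟨x, X⟩ := p
  constructor
  · rintro ⟨u, U, R, hX, hU, hx1, hu, hdiag, hx0, hxu, hpsd⟩
    exact ⟨hX, hx1, hx0, dir1 x u X U R hX hpsd⟩
  · rintro ⟨hX, hx1, hx0, hpsd⟩
    exact ⟨uvec n ρ x, Umat n ρ x, Rmat n ρ x, hX, Umat_symm x, hx1,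
      uvec_sum h2 x hx1, Umat_diag x, hx0, uvec_ge h1 x hx0,
      Matrix.PosSemidef.of_dotProduct_mulVec_nonneg (bigMat_herm x X hX) fun z => by
        rw [bigMat_quadform]
        exact key_ineq x X hx1 hx0 hpsd _ _ _⟩

end
end

section
/- Let Q = vvᵀ for some v ∈ ℝ^n. If v ≥ 0, or −v ≥ 0, or v_i = 0 for some i ∈ {1,…,n}, then ℓ^{R2}_ρ(Q) = ℓ_ρ(Q) for each ρ ∈ {1,…,n}. Otherwise, ℓ^{R2}_1(Q) < ℓ_1(Q) and ℓ^{R2}_ρ(Q) = ℓ_ρ(Q) for each ρ ∈ {2,…,n}. -/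
open Matrix BigOperators

noncomputable section

def ellR2 {n : ℕ} (Q : Matrix (Fin n) (Fin n) ℝ) (ρ : ℕ) : EReal :=
  sInf ((fun p => ((ip Q p.2 : ℝ) : EReal)) '' FR2proj n ρ)


-- ==================== auxiliary lemmas ====================

lemma psd_vmv {m : Type*} [Fintype m] (z : m → ℝ) : (Matrix.vecMulVec z z).PosSemidef := by
  refine Matrix.PosSemidef.of_dotProduct_mulVec_nonneg ?_ ?_
  · unfold Matrix.IsHermitian; ext i j; simp [vecMulVec_apply, mul_comm]
  · intro y
    have h : star y ⬝ᵥ (vecMulVec z z) *ᵥ y = (z ⬝ᵥ y)^2 := by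
      simp only [star_trivial, dotProduct, mulVec, vecMulVec_apply, sq,
        Finset.mul_sum, Finset.sum_mul]
      rw [Finset.sum_comm]
      congr 1; ext i; congr 1; ext j; ring
    rw [h]; positivity

lemma symm_vmv {n : ℕ} (z : Fin n → ℝ) : (Matrix.vecMulVec z z).IsSymm := by
  unfold Matrix.IsSymm; ext i j; simp [vecMulVec_apply, mul_comm]

lemma quadForm_vvt {n : ℕ} (v x : Fin n → ℝ) :
    quadForm (Matrix.vecMulVec v v) x = (v ⬝ᵥ x)^2 := by
  simp only [quadForm, dotProduct, mulVec, vecMulVec_apply, sq,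
    Finset.mul_sum, Finset.sum_mul]
  rw [Finset.sum_comm]
  congr 1; ext i; congr 1; ext j; ring

lemma ip_vvt {n : ℕ} (v : Fin n → ℝ) (X : Matrix (Fin n) (Fin n) ℝ) :
    ip (Matrix.vecMulVec v v) X = v ⬝ᵥ X.mulVec v := by
  simp only [ip, dotProduct, mulVec, vecMulVec_apply, Finset.mul_sum]
  congr 1; ext i; congr 1; ext j; ring

lemma ip_rank1 {n : ℕ} (v x : Fin n → ℝ) :
    ip (Matrix.vecMulVec v v) (Matrix.vecMulVec x x) = (v ⬝ᵥ x)^2 := by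
  rw [ip_vvt]
  simp only [dotProduct, mulVec, vecMulVec_apply, sq, Finset.mul_sum, Finset.sum_mul]
  rw [Finset.sum_comm]
  congr 1; ext i; congr 1; ext j; ring

lemma bigMat_rank1 {n : ℕ} (x u : Fin n → ℝ) :
    bigMat x u (vecMulVec x x) (vecMulVec u u) (vecMulVec x u)
      = vecMulVec (Sum.elim (fun (_ : Unit) => (1:ℝ)) (Sum.elim x u))
          (Sum.elim (fun (_ : Unit) => (1:ℝ)) (Sum.elim x u)) := by
  ext i j
  rcases i with i | i | i <;> rcases j with j | j | j <;>
    simp [bigMat, fromBlocks, vecMulVec_apply, transpose_apply, mul_comm]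

lemma feas_lower {n ρ : ℕ} {x u : Fin n → ℝ} {X U R : Matrix (Fin n) (Fin n) ℝ}
    (h : R2Feasible ρ x u X U R) (v : Fin n → ℝ) :
    (v ⬝ᵥ x)^2 ≤ ip (Matrix.vecMulVec v v) X := by
  rw [ip_vvt]
  have hpsd := h.2.2.2.2.2.2.2
  set c : ℝ := v ⬝ᵥ x with hc
  set w : Unit ⊕ (Fin n ⊕ Fin n) → ℝ := Sum.elim (fun _ => -c) (Sum.elim v 0) with hw
  have hq := hpsd.dotProduct_mulVec_nonneg w
  have key : star w ⬝ᵥ (bigMat x u X U R) *ᵥ w = v ⬝ᵥ X.mulVec v - c^2 := by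
    simp only [star_trivial, dotProduct, mulVec, Fintype.sum_sum_type, hw, bigMat,
      Sum.elim_inl, Sum.elim_inr, fromBlocks_apply₁₁, fromBlocks_apply₁₂,
      fromBlocks_apply₂₁, fromBlocks_apply₂₂, Matrix.of_apply, Pi.zero_apply,
      mul_zero, zero_mul, Finset.sum_const_zero, add_zero, zero_add,
      Finset.univ_unique, Finset.sum_singleton]
    have h1 : ∑ i, x i * v i = c := by
      rw [hc, dotProduct]; exact Finset.sum_congr rfl fun i _ => mul_comm _ _
    have e : ∀ i, v i * (x i * -c + ∑ j, X i j * v j)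
        = -c * (x i * v i) + v i * ∑ j, X i j * v j := fun i => by ring
    rw [Finset.sum_congr rfl (fun i _ => e i), Finset.sum_add_distrib, ← Finset.mul_sum, h1]
    show _ = ∑ i, v i * ∑ j, X i j * v j - c ^ 2
    ring
  rw [key] at hq
  linarith

lemma sum_two {n : ℕ} {i j : Fin n} (hij : i ≠ j) (a b : ℝ) :
    ∑ k, (if k = i then a else if k = j then b else 0) = a + b := by
  have h : ∀ k : Fin n, (if k = i then a else if k = j then b else 0) =
      a * (if k = i then 1 else 0) + b * (if k = j then 1 else 0) := by
    intro k
    by_cases h1 : k = i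
    · subst h1; simp [hij]
    · by_cases h2 : k = j <;> simp [h1, h2, Ne.symm hij]
  simp only [h, Finset.sum_add_distrib, ← Finset.mul_sum]
  simp [Finset.sum_ite_eq']

lemma dot_two {n : ℕ} {i j : Fin n} (hij : i ≠ j) (v : Fin n → ℝ) (a b : ℝ) :
    v ⬝ᵥ (fun k => if k = i then a else if k = j then b else 0) = v i * a + v j * b := by
  simp only [dotProduct]
  have h : ∀ k : Fin n, v k * (if k = i then a else if k = j then b else 0) =
      (if k = i then v i * a else if k = j then v j * b else 0) := by
    intro k
    by_cases h1 : k = i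
    · subst h1; simp
    · by_cases h2 : k = j
      · subst h2; simp [h1]
      · simp [h1, h2]
  simp only [h]
  exact sum_two hij _ _

lemma construct_rank1 {n ρ : ℕ} (hρn : ρ ≤ n) {x : Fin n → ℝ}
    (hx : x ∈ sparseF n ρ) : (x, Matrix.vecMulVec x x) ∈ FR2proj n ρ := by
  obtain ⟨⟨hsum, hpos⟩, hsp⟩ := hx
  have hfin : {i | x i ≠ 0}.Finite := Set.toFinite _
  obtain ⟨S, hS1, _, hS3⟩ := Finset.exists_subsuperset_card_eq (n := ρ)
    (hfin.toFinset.subset_univ)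
    (by rwa [← Set.ncard_eq_toFinset_card _ hfin]) (by simpa using hρn)
  set u : Fin n → ℝ := fun i => if i ∈ S then 1 else 0 with hu
  have hx1 : ∀ i, x i ≤ 1 := by
    intro i
    calc x i ≤ ∑ k, x k := Finset.single_le_sum (fun k _ => hpos k) (Finset.mem_univ i)
    _ = 1 := hsum
  refine ⟨u, vecMulVec u u, vecMulVec x u, symm_vmv x, symm_vmv u, hsum, ?_, ?_, hpos, ?_, ?_⟩
  · rw [hu]
    rw [Finset.sum_ite_mem, Finset.univ_inter, Finset.sum_const, hS3]
    simp
  · intro i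
    by_cases hiS : i ∈ S <;> simp [vecMulVec_apply, hu, hiS]
  · intro i
    by_cases hiS : i ∈ S
    · simpa [hu, hiS] using hx1 i
    · have hx0 : x i = 0 := by
        by_contra hne
        exact hiS (hS1 (hfin.mem_toFinset.mpr hne))
      simp [hu, hiS, hx0]
  · rw [bigMat_rank1]; exact psd_vmv _

def unitVec {n : ℕ} (j : Fin n) : Fin n → ℝ := fun k => if k = j then 1 else 0

lemma unitVec_mem {n : ℕ} (j : Fin n) : unitVec j ∈ sparseF n 1 := by
  refine ⟨⟨by simp [unitVec, Finset.sum_ite_eq'], fun i => by unfold unitVec; positivity⟩, ?_⟩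
  unfold sparsity
  have hsub : {i | unitVec j i ≠ 0} ⊆ {j} := by
    intro k hk
    by_contra hkj
    have hkj' : k ≠ j := fun h => hkj (by simp [h])
    exact hk (by simp [unitVec, hkj'])
  calc Set.ncard {i | unitVec j i ≠ 0} ≤ Set.ncard {j} :=
        Set.ncard_le_ncard hsub (Set.finite_singleton j)
  _ = 1 := Set.ncard_singleton j

lemma dot_unitVec {n : ℕ} (v : Fin n → ℝ) (j : Fin n) : v ⬝ᵥ unitVec j = v j := by
  simp [unitVec, dotProduct, mul_ite, Finset.sum_ite_eq']

lemma sparse1_char {n : ℕ} {x : Fin n → ℝ} (hx : x ∈ sparseF n 1) :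
    ∃ j, x = unitVec j := by
  obtain ⟨⟨hsum, hpos⟩, hsp⟩ := hx
  have hne : {i | x i ≠ 0}.Nonempty := by
    by_contra h
    rw [Set.not_nonempty_iff_eq_empty] at h
    have : ∀ i, x i = 0 := by
      intro i; by_contra hi
      exact absurd (Set.eq_empty_iff_forall_notMem.mp h i) (fun hh => hh hi)
    simp [this] at hsum
  have hfin : {i | x i ≠ 0}.Finite := Set.toFinite _
  have h1 : {i | x i ≠ 0}.ncard = 1 := le_antisymm hsp (by
    rw [Nat.one_le_iff_ne_zero]
    exact fun h0 => absurd ((Set.ncard_eq_zero hfin).mp h0)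
      (Set.nonempty_iff_ne_empty.mp hne))
  obtain ⟨j, hj⟩ := Set.ncard_eq_one.mp h1
  have hz : ∀ k, k ≠ j → x k = 0 := by
    intro k hk
    by_contra hxk
    have : k ∈ ({j} : Set (Fin n)) := hj ▸ hxk
    exact hk this
  have hxj : x j = 1 := by
    rw [← hsum, Finset.sum_eq_single j (fun k _ hk => hz k hk) (by simp)]
  refine ⟨j, funext fun k => ?_⟩
  by_cases hk : k = j
  · subst hk; simp [unitVec, hxj]
  · simp [unitVec, hk, hz k hk]

lemma dot_lb {n : ℕ} {x : Fin n → ℝ} (hx : x ∈ simplexF n) {v : Fin n → ℝ}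
    {c : ℝ} (hc : ∀ i, c ≤ v i) : c ≤ v ⬝ᵥ x := by
  calc c = ∑ i, c * x i := by rw [← Finset.mul_sum, hx.1, mul_one]
  _ ≤ ∑ i, v i * x i := by
      apply Finset.sum_le_sum; intro i _
      exact mul_le_mul_of_nonneg_right (hc i) (hx.2 i)
  _ = v ⬝ᵥ x := rfl

lemma dot_ub {n : ℕ} {x : Fin n → ℝ} (hx : x ∈ simplexF n) {v : Fin n → ℝ}
    {c : ℝ} (hc : ∀ i, v i ≤ c) : v ⬝ᵥ x ≤ c := by
  have := dot_lb hx (v := -v) (c := -c) (fun i => neg_le_neg (hc i))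
  have h2 : (-v) ⬝ᵥ x = -(v ⬝ᵥ x) := by simp [dotProduct, Finset.sum_neg_distrib]
  rw [h2] at this
  linarith

lemma sparseF_mono {n ρ ρ' : ℕ} (h : ρ ≤ ρ') : sparseF n ρ ⊆ sparseF n ρ' :=
  fun _ hx => ⟨hx.1, le_trans hx.2 h⟩

lemma construct_two_sparse {n ρ : ℕ} (hn : 0 < n) (hρ : 2 ≤ ρ) (v : Fin n → ℝ)
    {x : Fin n → ℝ} (hx : x ∈ simplexF n) :
    ∃ y ∈ sparseF n ρ, v ⬝ᵥ y = v ⬝ᵥ x := by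
  have hU : (Finset.univ : Finset (Fin n)).Nonempty := by
    simpa [Finset.univ_nonempty_iff, Fin.pos_iff_nonempty] using Fin.pos_iff_nonempty.mp hn
  obtain ⟨i0, _, hmin⟩ := Finset.exists_min_image Finset.univ v hU
  obtain ⟨i1, _, hmax⟩ := Finset.exists_max_image Finset.univ v hU
  have hlb : v i0 ≤ v ⬝ᵥ x := dot_lb hx (fun i => hmin i (Finset.mem_univ i))
  have hub : v ⬝ᵥ x ≤ v i1 := dot_ub hx (fun i => hmax i (Finset.mem_univ i))
  by_cases hD : v i1 - v i0 = 0
  · refine ⟨unitVec i0, sparseF_mono (by omega) (unitVec_mem i0), ?_⟩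
    rw [dot_unitVec]
    linarith
  · have hD' : 0 < v i1 - v i0 := by
      rcases lt_or_gt_of_ne hD with h | h
      · linarith
      · linarith
    have hij : i1 ≠ i0 := by
      intro h; rw [h] at hD; simp at hD
    set lam : ℝ := (v ⬝ᵥ x - v i0) / (v i1 - v i0) with hlam
    have hl0 : 0 ≤ lam := div_nonneg (by linarith) (le_of_lt hD')
    have hl1 : lam ≤ 1 := by
      rw [hlam, div_le_one hD']; linarith
    set y : Fin n → ℝ := fun k => if k = i1 then lam else if k = i0 then 1 - lam else 0
      with hy
    have hmem : y ∈ sparseF n ρ := by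
      refine ⟨⟨by rw [hy]; rw [sum_two hij]; ring, fun i => ?_⟩, ?_⟩
      · rw [hy]
        by_cases h1 : i = i1
        · simp [h1]; linarith
        · by_cases h2 : i = i0 <;> simp [h1, h2, Ne.symm hij] <;> linarith
      · unfold sparsity
        have hsub : {i | y i ≠ 0} ⊆ {i1, i0} := by
          intro k hk
          by_contra hkm
          simp only [Set.mem_insert_iff, Set.mem_singleton_iff] at hkm
          push_neg at hkm
          exact hk (by simp [hy, hkm.1, hkm.2])
        calc Set.ncard {i | y i ≠ 0} ≤ Set.ncard ({i1, i0} : Set (Fin n)) :=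
              Set.ncard_le_ncard hsub (Set.toFinite _)
        _ ≤ 2 := by
              calc Set.ncard ({i1, i0} : Set (Fin n)) ≤ ({i0} : Set (Fin n)).ncard + 1 :=
                    Set.ncard_insert_le i1 {i0}
              _ = 2 := by rw [Set.ncard_singleton]
        _ ≤ ρ := hρ
    refine ⟨y, hmem, ?_⟩
    have hkey : lam * (v i1 - v i0) = v ⬝ᵥ x - v i0 := by
      rw [hlam]; field_simp
    rw [hy, dot_two hij]
    linear_combination hkey

lemma ereal_le_coe_csInf {A : Set ℝ} (hA : A.Nonempty) {c : EReal}
    (h : ∀ a ∈ A, c ≤ (a : EReal)) : c ≤ ((sInf A : ℝ) : EReal) := by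
  induction c using EReal.rec with
  | bot => exact bot_le
  | coe r =>
      exact EReal.coe_le_coe_iff.mpr (le_csInf hA fun a ha => EReal.coe_le_coe_iff.mp (h a ha))
  | top =>
      obtain ⟨a, ha⟩ := hA
      exact absurd (h a ha) (by simp)

lemma psd_avg {m : Type*} [Fintype m] {A B : Matrix m m ℝ}
    (hA : A.PosSemidef) (hB : B.PosSemidef) : ((1/2 : ℝ) • (A + B)).PosSemidef := by
  refine Matrix.PosSemidef.of_dotProduct_mulVec_nonneg ?_ ?_
  · show ((1/2 : ℝ) • (A + B))ᴴ = _
    ext i j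
    simp only [Matrix.conjTranspose_apply, Matrix.smul_apply, star_trivial, smul_eq_mul]
    have h1 := hA.1.apply i j
    have h2 := hB.1.apply i j
    simp only [star_trivial] at h1 h2
    rw [Matrix.add_apply, Matrix.add_apply, h1, h2]
  · intro y
    have h : star y ⬝ᵥ ((1/2 : ℝ) • (A + B)) *ᵥ y
        = (1/2 : ℝ) * (star y ⬝ᵥ A *ᵥ y + star y ⬝ᵥ B *ᵥ y) := by
      rw [Matrix.smul_mulVec, Matrix.add_mulVec, dotProduct_smul, dotProduct_add]
      simp [smul_eq_mul]
    rw [h]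
    have := hA.dotProduct_mulVec_nonneg y
    have := hB.dotProduct_mulVec_nonneg y
    positivity

lemma bigMat_avg {n : ℕ} (x u1 u2 : Fin n → ℝ) (hav : ∀ k, u1 k + u2 k = 2 * x k) :
    bigMat x x (vecMulVec x x) ((1/2 : ℝ) • (vecMulVec u1 u1 + vecMulVec u2 u2)) (vecMulVec x x)
      = (1/2 : ℝ) • (vecMulVec (Sum.elim (fun (_ : Unit) => (1:ℝ)) (Sum.elim x u1))
            (Sum.elim (fun (_ : Unit) => (1:ℝ)) (Sum.elim x u1))
          + vecMulVec (Sum.elim (fun (_ : Unit) => (1:ℝ)) (Sum.elim x u2))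
            (Sum.elim (fun (_ : Unit) => (1:ℝ)) (Sum.elim x u2))) := by
  ext i j
  rcases i with i | i | i <;> rcases j with j | j | j <;>
    simp only [bigMat, Matrix.fromBlocks_apply₁₁, Matrix.fromBlocks_apply₁₂,
      Matrix.fromBlocks_apply₂₁, Matrix.fromBlocks_apply₂₂, Matrix.of_apply,
      Sum.elim_inl, Sum.elim_inr, Matrix.smul_apply, Matrix.add_apply,
      vecMulVec_apply, Matrix.transpose_apply, smul_eq_mul]
  · ring
  · ring
  · have := hav j; linarith
  · ring
  · ring
  · linear_combination (-(x i) / 2) * hav j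
  · have := hav i; linarith
  · linear_combination (-(x j) / 2) * hav i

lemma quadForm_unitVec {n : ℕ} (v : Fin n → ℝ) (j : Fin n) :
    quadForm (Matrix.vecMulVec v v) (unitVec j) = (v j)^2 := by
  rw [quadForm_vvt, dot_unitVec]

lemma construct_strict {n : ℕ} {v : Fin n → ℝ} {i j : Fin n}
    (hi : 0 < v i) (hj : v j < 0) :
    ∃ p ∈ FR2proj n 1, ip (Matrix.vecMulVec v v) p.2 = 0 := by
  have hij : i ≠ j := fun h => by rw [h] at hi; linarith
  have hD : 0 < v i - v j := by linarith
  obtain ⟨m, hm⟩ : ∃ m : ℝ, m = -v j / (v i - v j) := ⟨_, rfl⟩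
  have hm0 : 0 < m := hm ▸ div_pos (by linarith) hD
  have hm1 : m < 1 := by rw [hm, div_lt_one hD]; linarith
  obtain ⟨d, hdd⟩ : ∃ d : ℝ, d = Real.sqrt (m * (1 - m)) := ⟨_, rfl⟩
  have hd2 : d ^ 2 = m * (1 - m) := by rw [hdd]; exact Real.sq_sqrt (by nlinarith)
  obtain ⟨x, hx⟩ : ∃ x : Fin n → ℝ,
    x = fun k => if k = i then m else if k = j then 1 - m else 0 := ⟨_, rfl⟩
  obtain ⟨u1, hu1⟩ : ∃ u1 : Fin n → ℝ,
    u1 = fun k => if k = i then m + d else if k = j then 1 - m - d else 0 := ⟨_, rfl⟩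
  obtain ⟨u2, hu2⟩ : ∃ u2 : Fin n → ℝ,
    u2 = fun k => if k = i then m - d else if k = j then 1 - m + d else 0 := ⟨_, rfl⟩
  have hav : ∀ k, u1 k + u2 k = 2 * x k := by
    intro k
    rw [hx, hu1, hu2]
    by_cases h1 : k = i
    · simp only [h1, if_pos, if_true, ite_true, eq_self_iff_true]; ring
    · by_cases h2 : k = j
      · simp only [h1, h2, if_neg (show ¬ (j = i) from fun h => hij h.symm),
          if_pos, ite_true, ite_false, eq_self_iff_true, if_false]
        ring
      · simp [h1, h2]
  have hdot : v ⬝ᵥ x = 0 := by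
    rw [hx, dot_two hij, hm]
    field_simp
    ring
  have hUsym : ((1/2 : ℝ) • (vecMulVec u1 u1 + vecMulVec u2 u2)).IsSymm := by
    show _ᵀ = _
    rw [Matrix.transpose_smul, Matrix.transpose_add]
    rw [show (vecMulVec u1 u1)ᵀ = vecMulVec u1 u1 from symm_vmv u1,
      show (vecMulVec u2 u2)ᵀ = vecMulVec u2 u2 from symm_vmv u2]
  refine ⟨(x, vecMulVec x x), ⟨x, (1/2 : ℝ) • (vecMulVec u1 u1 + vecMulVec u2 u2),
    vecMulVec x x, symm_vmv x, hUsym, ?_, ?_, ?_, ?_, fun k => le_refl _, ?_⟩, ?_⟩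
  · rw [hx, sum_two hij]; ring
  · rw [hx, sum_two hij]; norm_num
  · intro k
    simp only [Matrix.smul_apply, Matrix.add_apply, vecMulVec_apply, smul_eq_mul]
    rw [hx, hu1, hu2]
    by_cases h1 : k = i
    · simp only [h1, if_pos, ite_true, eq_self_iff_true]; linear_combination hd2
    · by_cases h2 : k = j
      · simp only [h1, h2, if_neg (show ¬ (j = i) from fun h => hij h.symm),
          if_pos, ite_true, ite_false, eq_self_iff_true, if_false]
        linear_combination hd2
      · simp [h1, h2]
  · intro k
    rw [hx]
    by_cases h1 : k = i
    · simp only [h1, if_pos, ite_true, eq_self_iff_true]; linarith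
    · by_cases h2 : k = j
      · simp only [h1, h2, if_neg (show ¬ (j = i) from fun h => hij h.symm),
          if_pos, ite_true, ite_false, eq_self_iff_true, if_false]
        linarith
      · simp [h1, h2]
  · rw [bigMat_avg x u1 u2 hav]
    exact psd_avg (psd_vmv _) (psd_vmv _)
  · show ip _ (vecMulVec x x) = 0
    rw [ip_rank1, hdot]
    norm_num

theorem stmt10 {n : ℕ} (hn : 0 < n) (v : Fin n → ℝ) :
    (((∀ i, 0 ≤ v i) ∨ (∀ i, 0 ≤ -v i) ∨ (∃ i, v i = 0)) →
      ∀ ρ : ℕ, 1 ≤ ρ → ρ ≤ n →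
        ellR2 (Matrix.vecMulVec v v) ρ = (ellSparse (Matrix.vecMulVec v v) ρ : EReal)) ∧
    (¬((∀ i, 0 ≤ v i) ∨ (∀ i, 0 ≤ -v i) ∨ (∃ i, v i = 0)) →
      ellR2 (Matrix.vecMulVec v v) 1 < (ellSparse (Matrix.vecMulVec v v) 1 : EReal) ∧
      ∀ ρ : ℕ, 2 ≤ ρ → ρ ≤ n →
        ellR2 (Matrix.vecMulVec v v) ρ = (ellSparse (Matrix.vecMulVec v v) ρ : EReal)) := by
  have hUne : (Finset.univ : Finset (Fin n)).Nonempty :=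
    ⟨⟨0, hn⟩, Finset.mem_univ _⟩
  set Q := Matrix.vecMulVec v v with hQ
  have hAne : ∀ ρ : ℕ, 1 ≤ ρ → (quadForm Q '' sparseF n ρ).Nonempty := by
    intro ρ hρ
    exact ⟨_, Set.mem_image_of_mem _ (sparseF_mono hρ (unitVec_mem ⟨0, hn⟩))⟩
  have hbdd : ∀ ρ : ℕ, BddBelow (quadForm Q '' sparseF n ρ) := by
    intro ρ
    refine ⟨0, ?_⟩
    rintro a ⟨y, _, rfl⟩
    rw [hQ, quadForm_vvt]
    positivity
  have hupper : ∀ ρ : ℕ, 1 ≤ ρ → ρ ≤ n → ellR2 Q ρ ≤ ((ellSparse Q ρ : ℝ) : EReal) := by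
    intro ρ h1 h2
    unfold ellSparse
    apply ereal_le_coe_csInf (hAne ρ h1)
    rintro a ⟨y, hy, rfl⟩
    apply sInf_le
    refine ⟨(y, vecMulVec y y), construct_rank1 h2 hy, ?_⟩
    have h : ip Q (vecMulVec y y) = quadForm Q y := by
      rw [hQ, ip_rank1, quadForm_vvt]
    show ((ip Q (vecMulVec y y) : ℝ) : EReal) = ((quadForm Q y : ℝ) : EReal)
    rw [h]
  have hlower : ∀ ρ : ℕ,
      (∀ z, z ∈ simplexF n → ∃ a ∈ quadForm Q '' sparseF n ρ, a ≤ (v ⬝ᵥ z)^2) →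
      ((ellSparse Q ρ : ℝ) : EReal) ≤ ellR2 Q ρ := by
    intro ρ H
    apply le_sInf
    rintro b ⟨p, ⟨u, U, R, hfeas⟩, rfl⟩
    rw [EReal.coe_le_coe_iff]
    have hz : p.1 ∈ simplexF n := ⟨hfeas.2.2.1, hfeas.2.2.2.2.2.1⟩
    obtain ⟨a, haA, hale⟩ := H p.1 hz
    calc ellSparse Q ρ ≤ a := csInf_le (hbdd ρ) haA
    _ ≤ (v ⬝ᵥ p.1)^2 := hale
    _ ≤ ip Q p.2 := by rw [hQ]; exact feas_lower hfeas v
  have H2 : ∀ ρ : ℕ, 2 ≤ ρ → ∀ z, z ∈ simplexF n →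
      ∃ a ∈ quadForm Q '' sparseF n ρ, a ≤ (v ⬝ᵥ z)^2 := by
    intro ρ hρ z hz
    obtain ⟨y, hy, hdy⟩ := construct_two_sparse hn hρ v hz
    exact ⟨quadForm Q y, Set.mem_image_of_mem _ hy, by rw [hQ, quadForm_vvt, hdy]⟩
  constructor
  · intro hsign ρ h1 h2
    have H : ∀ z, z ∈ simplexF n → ∃ a ∈ quadForm Q '' sparseF n ρ, a ≤ (v ⬝ᵥ z)^2 := by
      rcases Nat.lt_or_ge ρ 2 with hρ2 | hρ2
      · have hρ1 : ρ = 1 := by omega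
        subst hρ1
        intro z hz
        rcases hsign with h | h | ⟨i0, hi0⟩
        · obtain ⟨j, _, hmin⟩ := Finset.exists_min_image Finset.univ v hUne
          refine ⟨quadForm Q (unitVec j), Set.mem_image_of_mem _ (unitVec_mem j), ?_⟩
          rw [hQ, quadForm_unitVec]
          have hle : v j ≤ v ⬝ᵥ z := dot_lb hz (fun k => hmin k (Finset.mem_univ k))
          exact pow_le_pow_left₀ (h j) hle 2
        · obtain ⟨j, _, hmax⟩ := Finset.exists_max_image Finset.univ v hUne
          refine ⟨quadForm Q (unitVec j), Set.mem_image_of_mem _ (unitVec_mem j), ?_⟩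
          rw [hQ, quadForm_unitVec]
          have hle : v ⬝ᵥ z ≤ v j := dot_ub hz (fun k => hmax k (Finset.mem_univ k))
          have h0 : v j ≤ 0 := by have := h j; linarith
          nlinarith
        · refine ⟨quadForm Q (unitVec i0), Set.mem_image_of_mem _ (unitVec_mem i0), ?_⟩
          rw [hQ, quadForm_unitVec, hi0]
          simpa using sq_nonneg (v ⬝ᵥ z)
      · exact H2 ρ hρ2
    exact le_antisymm (hupper ρ h1 h2) (hlower ρ H)
  · intro hnot
    push_neg at hnot
    obtain ⟨hneg, hpos, hnz⟩ := hnot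
    obtain ⟨j, hj⟩ := hneg
    obtain ⟨i, hi⟩ := hpos
    have hi' : 0 < v i := by linarith
    constructor
    · obtain ⟨p, hp, hip⟩ := construct_strict hi' hj
      have hle : ellR2 Q 1 ≤ ((0 : ℝ) : EReal) := by
        apply sInf_le
        refine ⟨p, hp, ?_⟩
        show ((ip Q p.2 : ℝ) : EReal) = ((0 : ℝ) : EReal)
        rw [hQ, hip]
      have hgt : (0 : ℝ) < ellSparse Q 1 := by
        obtain ⟨k0, _, hk0⟩ := Finset.exists_min_image Finset.univ (fun k => (v k)^2) hUne
        have hpos0 : 0 < (v k0)^2 := by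
          have := hnz k0
          positivity
        have hle0 : (v k0)^2 ≤ ellSparse Q 1 := by
          apply le_csInf (hAne 1 le_rfl)
          rintro a ⟨y, hy, rfl⟩
          obtain ⟨jj, rfl⟩ := sparse1_char hy
          rw [hQ, quadForm_unitVec]
          exact hk0 jj (Finset.mem_univ jj)
        linarith
      calc ellR2 Q 1 ≤ ((0 : ℝ) : EReal) := hle
      _ < ((ellSparse Q 1 : ℝ) : EReal) := by exact_mod_cast hgt
    · intro ρ h1 h2
      exact le_antisymm (hupper ρ (by omega) h2) (hlower ρ (H2 ρ h1))

end
end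

section
/- For every ρ ∈ {1,…,n}, conv{(x, xxᵀ) : x ∈ F_ρ} ⊆ F^{R3}_ρ, i.e., the convex hull of the lifted ρ-sparse simplex points is contained in the projected SDP-RLT feasible set. -/
open Matrix BigOperators

noncomputable section

def R3Feasible {n : ℕ} (ρ : ℕ) (x u : Fin n → ℝ)
    (X U R : Matrix (Fin n) (Fin n) ℝ) : Prop :=
  R1Feasible ρ x u X U R ∧ (bigMat x u X U R).PosSemidef

def FR3proj (n ρ : ℕ) : Set ((Fin n → ℝ) × Matrix (Fin n) (Fin n) ℝ) :=
  {p | ∃ u U R, R3Feasible ρ p.1 u p.2 U R}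

lemma psd_outer {m : Type*} [Fintype m] (v : m → ℝ) : (Matrix.vecMulVec v v).PosSemidef := by
  rw [Matrix.posSemidef_iff_dotProduct_mulVec]
  constructor
  · ext i j; simp [Matrix.vecMulVec_apply, Matrix.conjTranspose_apply, mul_comm]
  · intro y
    have h : (Matrix.vecMulVec v v) *ᵥ y = (v ⬝ᵥ y) • v := by
      ext i
      simp [Matrix.mulVec, Matrix.vecMulVec_apply, dotProduct, Finset.mul_sum, mul_assoc,
        mul_comm, mul_left_comm]
    rw [h, dotProduct_smul]
    have h2 : star y ⬝ᵥ v = v ⬝ᵥ y := by simp [dotProduct, mul_comm]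
    rw [h2, smul_eq_mul]
    exact mul_self_nonneg _

lemma psd_smul_s11 {m : Type*} [Fintype m] {M : Matrix m m ℝ} (h : M.PosSemidef) {a : ℝ}
    (ha : 0 ≤ a) : (a • M).PosSemidef := by
  rw [Matrix.posSemidef_iff_dotProduct_mulVec]
  refine ⟨?_, fun y => ?_⟩
  · unfold Matrix.IsHermitian
    rw [Matrix.conjTranspose_smul, h.1]
    simp
  · rw [Matrix.smul_mulVec, dotProduct_smul]
    exact mul_nonneg ha (h.dotProduct_mulVec_nonneg y)

lemma mem_gen {n ρ : ℕ} (h2 : ρ ≤ n) {x : Fin n → ℝ} (hx : x ∈ sparseF n ρ) :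
    ((x, Matrix.vecMulVec x x) : (Fin n → ℝ) × Matrix (Fin n) (Fin n) ℝ) ∈ FR3proj n ρ := by
  classical
  obtain ⟨⟨hsum, hpos⟩, hsp⟩ := hx
  set S0 : Finset (Fin n) := Finset.univ.filter (fun i => x i ≠ 0) with hS0
  have hcard0 : S0.card ≤ ρ := by
    have he : {i | x i ≠ 0} = (↑S0 : Set (Fin n)) := by ext i; simp [hS0]
    have h' := hsp
    rwa [sparsity, he, Set.ncard_coe_finset] at h'
  obtain ⟨S, hS0S, hScard⟩ := Finset.exists_superset_card_eq hcard0 (by simpa using h2)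
  set u : Fin n → ℝ := fun i => if i ∈ S then 1 else 0 with hu
  have hu0 : ∀ i, 0 ≤ u i := fun i => by by_cases h : i ∈ S <;> simp [hu, h]
  have husq : ∀ i, u i * u i = u i := fun i => by by_cases h : i ∈ S <;> simp [hu, h]
  have hx0 : ∀ i, i ∉ S → x i = 0 := fun i hi => by
    by_contra h; exact hi (hS0S (by simp [hS0, h]))
  have hx1 : ∀ i, x i ≤ 1 := fun i =>
    hsum ▸ Finset.single_le_sum (fun j _ => hpos j) (Finset.mem_univ i)
  have hxu : ∀ i, x i ≤ u i := fun i => by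
    by_cases h : i ∈ S
    · simpa [hu, h] using hx1 i
    · simp [hu, h, hx0 i h]
  have hsumu : (∑ i, u i) = (ρ : ℝ) := by
    rw [hu]
    rw [Finset.sum_ite_mem]
    simp [Finset.univ_inter, hScard]
  refine ⟨u, Matrix.vecMulVec u u, Matrix.vecMulVec x u,
    ⟨⟨?_, ?_, hsum, hsumu, hxu, hpos, ?_, ?_, ?_, ?_, ?_, ?_, ?_, ?_, ?_, ?_, ?_⟩, ?_⟩⟩
  · ext i j; simp [Matrix.vecMulVec_apply, mul_comm]
  · ext i j; simp [Matrix.vecMulVec_apply, mul_comm]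
  · intro i; simpa [Matrix.vecMulVec_apply] using husq i
  · intro i; simp [Matrix.vecMulVec_apply, ← Finset.mul_sum, hsum]
  · intro j; simp [Matrix.vecMulVec_apply, ← Finset.sum_mul, hsum]
  · intro i; simp [Matrix.vecMulVec_apply, ← Finset.mul_sum, hsumu]; ring
  · intro i; simp [Matrix.vecMulVec_apply, ← Finset.mul_sum, hsumu]; ring
  · intro i j
    simp only [Matrix.vecMulVec_apply]
    nlinarith [mul_nonneg (sub_nonneg.2 (hxu i)) (sub_nonneg.2 (hxu j))]
  · intro i j
    simp only [Matrix.vecMulVec_apply]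
    nlinarith [mul_nonneg (hpos j) (sub_nonneg.2 (hxu i))]
  · intro i j
    simp only [Matrix.vecMulVec_apply]
    nlinarith [mul_nonneg (hu0 j) (sub_nonneg.2 (hxu i))]
  · intro i j; exact mul_nonneg (hpos i) (hpos j)
  · intro i j; exact mul_nonneg (hpos i) (hu0 j)
  · intro i j; exact mul_nonneg (hu0 i) (hu0 j)
  · -- PSD
    have hv : bigMat x u (Matrix.vecMulVec x x) (Matrix.vecMulVec u u) (Matrix.vecMulVec x u)
        = Matrix.vecMulVec (Sum.elim (fun _ => (1:ℝ)) (Sum.elim x u))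
            (Sum.elim (fun _ => (1:ℝ)) (Sum.elim x u)) := by
      ext i j
      rcases i with _ | i | i <;> rcases j with _ | j | j <;>
        simp [bigMat, Matrix.vecMulVec_apply, mul_comm]
    rw [hv]
    exact psd_outer _

lemma convex_FR3 (n ρ : ℕ) : Convex ℝ (FR3proj n ρ) := by
  rintro ⟨x1, X1⟩ hp ⟨x2, X2⟩ hq a b ha hb hab
  replace hp : ∃ u U R, R3Feasible ρ x1 u X1 U R := hp
  replace hq : ∃ u U R, R3Feasible ρ x2 u X2 U R := hq
  obtain ⟨u1, U1, R1, ⟨hs1, hUs1, hx1, hu1, hxu1, hx01, hd1, hXr1, hRc1, hRr1, hUr1,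
    hq11, hq21, hq31, hXp1, hRp1, hUp1⟩, hP1⟩ := hp
  obtain ⟨u2, U2, R2, ⟨hs2, hUs2, hx2, hu2, hxu2, hx02, hd2, hXr2, hRc2, hRr2, hUr2,
    hq12, hq22, hq32, hXp2, hRp2, hUp2⟩, hP2⟩ := hq
  show ∃ u U R, R3Feasible ρ (a • x1 + b • x2) u (a • X1 + b • X2) U R
  refine ⟨a • u1 + b • u2, a • U1 + b • U2, a • R1 + b • R2, ⟨?_, ?_, ?_, ?_, ?_, ?_, ?_,
    ?_, ?_, ?_, ?_, ?_, ?_, ?_, ?_, ?_, ?_⟩, ?_⟩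
  · show (a • X1 + b • X2)ᵀ = _
    rw [Matrix.transpose_add, Matrix.transpose_smul, Matrix.transpose_smul, hs1.eq, hs2.eq]
  · show (a • U1 + b • U2)ᵀ = _
    rw [Matrix.transpose_add, Matrix.transpose_smul, Matrix.transpose_smul, hUs1.eq, hUs2.eq]
  · simp only [Pi.add_apply, Pi.smul_apply, smul_eq_mul, Finset.sum_add_distrib,
      ← Finset.mul_sum, hx1, hx2]
    linarith
  · simp only [Pi.add_apply, Pi.smul_apply, smul_eq_mul, Finset.sum_add_distrib,
      ← Finset.mul_sum, hu1, hu2]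
    linear_combination (ρ : ℝ) * hab
  · intro i
    simp only [Pi.add_apply, Pi.smul_apply, smul_eq_mul]
    have h1 := mul_le_mul_of_nonneg_left (hxu1 i) ha
    have h2 := mul_le_mul_of_nonneg_left (hxu2 i) hb
    linarith
  · intro i
    simp only [Pi.add_apply, Pi.smul_apply, smul_eq_mul]
    have h1 := mul_nonneg ha (hx01 i)
    have h2 := mul_nonneg hb (hx02 i)
    linarith
  · intro i
    simp only [Matrix.add_apply, Matrix.smul_apply, Pi.add_apply, Pi.smul_apply, smul_eq_mul,
      hd1 i, hd2 i]
  · intro i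
    simp only [Matrix.add_apply, Matrix.smul_apply, Pi.add_apply, Pi.smul_apply, smul_eq_mul,
      Finset.sum_add_distrib, ← Finset.mul_sum, hXr1 i, hXr2 i]
  · intro j
    simp only [Matrix.add_apply, Matrix.smul_apply, Pi.add_apply, Pi.smul_apply, smul_eq_mul,
      Finset.sum_add_distrib, ← Finset.mul_sum, hRc1 j, hRc2 j]
  · intro i
    simp only [Matrix.add_apply, Matrix.smul_apply, Pi.add_apply, Pi.smul_apply, smul_eq_mul,
      Finset.sum_add_distrib, ← Finset.mul_sum, hRr1 i, hRr2 i]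
    ring
  · intro i
    simp only [Matrix.add_apply, Matrix.smul_apply, Pi.add_apply, Pi.smul_apply, smul_eq_mul,
      Finset.sum_add_distrib, ← Finset.mul_sum, hUr1 i, hUr2 i]
    ring
  · intro i j
    simp only [Matrix.add_apply, Matrix.smul_apply, smul_eq_mul]
    nlinarith [mul_nonneg ha (hq11 i j), mul_nonneg hb (hq12 i j)]
  · intro i j
    simp only [Matrix.add_apply, Matrix.smul_apply, smul_eq_mul]
    nlinarith [mul_nonneg ha (neg_nonneg.2 (hq21 i j)), mul_nonneg hb (neg_nonneg.2 (hq22 i j))]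
  · intro i j
    simp only [Matrix.add_apply, Matrix.smul_apply, smul_eq_mul]
    nlinarith [mul_nonneg ha (neg_nonneg.2 (hq31 i j)), mul_nonneg hb (neg_nonneg.2 (hq32 i j))]
  · intro i j
    simp only [Matrix.add_apply, Matrix.smul_apply, smul_eq_mul]
    have h1 := mul_nonneg ha (hXp1 i j); have h2 := mul_nonneg hb (hXp2 i j)
    linarith
  · intro i j
    simp only [Matrix.add_apply, Matrix.smul_apply, smul_eq_mul]
    have h1 := mul_nonneg ha (hRp1 i j); have h2 := mul_nonneg hb (hRp2 i j)
    linarith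
  · intro i j
    simp only [Matrix.add_apply, Matrix.smul_apply, smul_eq_mul]
    have h1 := mul_nonneg ha (hUp1 i j); have h2 := mul_nonneg hb (hUp2 i j)
    linarith
  · have hM : bigMat (a • x1 + b • x2) (a • u1 + b • u2) (a • X1 + b • X2)
        (a • U1 + b • U2) (a • R1 + b • R2)
        = a • bigMat x1 u1 X1 U1 R1 + b • bigMat x2 u2 X2 U2 R2 := by
      ext i j
      rcases i with _ | i | i <;> rcases j with _ | j | j <;>
        simp [bigMat, Matrix.add_apply, Matrix.smul_apply, Pi.add_apply, Pi.smul_apply,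
          smul_eq_mul] <;> linarith
    rw [hM]
    exact (psd_smul_s11 hP1 ha).add (psd_smul_s11 hP2 hb)

theorem stmt11 {n : ℕ} (hn : 0 < n) (ρ : ℕ) (h1 : 1 ≤ ρ) (h2 : ρ ≤ n) :
    convexHull ℝ
      {p : (Fin n → ℝ) × Matrix (Fin n) (Fin n) ℝ |
        ∃ x ∈ sparseF n ρ, p = (x, Matrix.vecMulVec x x)} ⊆ FR3proj n ρ := by
  apply convexHull_min
  · rintro p ⟨x, hx, rfl⟩
    exact mem_gen h2 hx
  · exact convex_FR3 n ρ


end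
end

section
/- For every ρ ∈ {2,…,n}, {(x,X) ∈ F^{R3} : ‖x‖₀ ≤ ρ} ⊆ F^{R3}_ρ, i.e., every SDP-RLT-feasible pair of the unconstrained StQP whose x-part is ρ-sparse is retained by the projected SDP-RLT feasible set of the sparse StQP. -/
open Matrix BigOperators

noncomputable section

def FR3 (n : ℕ) : Set ((Fin n → ℝ) × Matrix (Fin n) (Fin n) ℝ) :=
  {p | p.2.IsSymm ∧ (∑ i, p.1 i) = 1 ∧ (∀ i, (∑ j, p.2 i j) = p.1 i) ∧
    (∀ i, 0 ≤ p.1 i) ∧ (∀ i j, 0 ≤ p.2 i j) ∧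
    (p.2 - Matrix.vecMulVec p.1 p.1).PosSemidef}


lemma psd_vecMulVec {m : Type*} [Fintype m] (w : m → ℝ) :
    (Matrix.vecMulVec w w).PosSemidef := by
  refine Matrix.PosSemidef.of_dotProduct_mulVec_nonneg ?_ ?_
  · ext i j
    simp [Matrix.vecMulVec, Matrix.conjTranspose_apply, mul_comm]
  · intro v
    have h : Matrix.vecMulVec w w *ᵥ v = fun i => w i * (w ⬝ᵥ v) := by
      ext i
      simp [Matrix.mulVec, Matrix.vecMulVec, dotProduct, Finset.mul_sum, mul_assoc]
    rw [h]
    have h2 : (star v) ⬝ᵥ (fun i => w i * (w ⬝ᵥ v)) = (w ⬝ᵥ v) * (w ⬝ᵥ v) := by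
      simp only [star_trivial, dotProduct]
      conv_rhs => rw [Finset.sum_mul]
      apply Finset.sum_congr rfl
      intros; ring
    rw [h2]
    exact mul_self_nonneg _

lemma psd_block_left {m l : Type*} [Fintype m] [Fintype l] {A : Matrix m m ℝ}
    (hA : A.PosSemidef) :
    (Matrix.fromBlocks A 0 0 (0 : Matrix l l ℝ)).PosSemidef := by
  have hs : ∀ i j, A j i = A i j := fun i j => by
    conv_lhs => rw [← hA.1]
    simp [Matrix.conjTranspose_apply]
  refine Matrix.PosSemidef.of_dotProduct_mulVec_nonneg ?_ ?_
  · ext (i | i) (j | j) <;>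
      simp [Matrix.conjTranspose_apply, Matrix.fromBlocks, hs]
  · intro v
    have hv : v = Sum.elim (v ∘ Sum.inl) (v ∘ Sum.inr) := (Sum.elim_comp_inl_inr v).symm
    rw [hv, Matrix.fromBlocks_mulVec]
    simp only [star_trivial, Matrix.zero_mulVec, add_zero, zero_add,
      sumElim_dotProduct_sumElim, dotProduct_zero]
    have := hA.dotProduct_mulVec_nonneg (v ∘ Sum.inl)
    simpa using this

lemma psd_block_right {m l : Type*} [Fintype m] [Fintype l] {D : Matrix l l ℝ}
    (hD : D.PosSemidef) :
    (Matrix.fromBlocks (0 : Matrix m m ℝ) 0 0 D).PosSemidef := by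
  have hs : ∀ i j, D j i = D i j := fun i j => by
    conv_lhs => rw [← hD.1]
    simp [Matrix.conjTranspose_apply]
  refine Matrix.PosSemidef.of_dotProduct_mulVec_nonneg ?_ ?_
  · ext (i | i) (j | j) <;>
      simp [Matrix.conjTranspose_apply, Matrix.fromBlocks, hs]
  · intro v
    have hv : v = Sum.elim (v ∘ Sum.inl) (v ∘ Sum.inr) := (Sum.elim_comp_inl_inr v).symm
    rw [hv, Matrix.fromBlocks_mulVec]
    simp only [star_trivial, Matrix.zero_mulVec, add_zero, zero_add,
      sumElim_dotProduct_sumElim, dotProduct_zero]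
    have := hD.dotProduct_mulVec_nonneg (v ∘ Sum.inr)
    simpa using this

theorem stmt14 {n : ℕ} (hn : 0 < n) (ρ : ℕ) (h1 : 2 ≤ ρ) (h2 : ρ ≤ n) :
    {p ∈ FR3 n | sparsity p.1 ≤ ρ} ⊆ FR3proj n ρ := by
  rintro ⟨x, X⟩ ⟨⟨hsym, hsum, hrow, hxnn, hXnn, hpsd⟩, hsp⟩
  simp only at hsym hsum hrow hxnn hXnn hpsd hsp ⊢
  -- support finset
  classical
  set T : Finset (Fin n) := Finset.univ.filter (fun i => x i ≠ 0) with hTdef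
  have hTcard : T.card ≤ ρ := by
    have : sparsity x = T.card := by
      have hset : {i | x i ≠ 0} = (↑T : Set (Fin n)) := by
        ext i; simp [hTdef]
      rw [sparsity, hset, Set.ncard_coe_finset]
    exact this ▸ hsp
  obtain ⟨S, hTS, hScard⟩ := Finset.exists_superset_card_eq hTcard (by simpa using h2)
  set u : Fin n → ℝ := fun i => if i ∈ S then 1 else 0 with hudef
  have hun : ∀ i, 0 ≤ u i := fun i => by by_cases hi : i ∈ S <;> simp [hudef, hi]
  have hxS : ∀ i, i ∉ S → x i = 0 := by
    intro i hi
    by_contra hne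
    exact hi (hTS (Finset.mem_filter.2 ⟨Finset.mem_univ i, hne⟩))
  have hx1 : ∀ i, x i ≤ 1 := by
    intro i
    have := Finset.single_le_sum (fun j _ => hxnn j) (Finset.mem_univ i)
    linarith [hsum ▸ this]
  have hxu : ∀ i, x i ≤ u i := by
    intro i
    by_cases hi : i ∈ S
    · simp [hudef, hi, hx1 i]
    · simp [hudef, hi, hxS i hi]
  have hsymm' : ∀ i j, X i j = X j i := fun i j => hsym.apply j i
  have hXrowle : ∀ i j, X i j ≤ x i := by
    intro i j
    have := Finset.single_le_sum (fun k _ => hXnn i k) (Finset.mem_univ j)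
    linarith [(hrow i) ▸ this]
  have hXcol : ∀ i j, X i j ≤ x j := fun i j => (hsymm' i j) ▸ hXrowle j i
  have hXz : ∀ i j, i ∉ S → X i j = 0 := by
    intro i j hi
    have h1 := hXrowle i j
    have h2 := hXnn i j
    have := hxS i hi
    linarith
  have hlb : ∀ i j, x i + x j - 1 ≤ X i j := by
    intro i j
    have h1 : ∑ k ∈ Finset.univ.erase j, X i k ≤ ∑ k ∈ Finset.univ.erase j, x k :=
      Finset.sum_le_sum (fun k _ => hXcol i k)
    have h2 : X i j + ∑ k ∈ Finset.univ.erase j, X i k = x i := by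
      rw [Finset.add_sum_erase _ _ (Finset.mem_univ j)]; exact hrow i
    have h3 : x j + ∑ k ∈ Finset.univ.erase j, x k = 1 := by
      rw [Finset.add_sum_erase _ _ (Finset.mem_univ j)]; exact hsum
    linarith
  have usum : ∑ i, u i = (ρ : ℝ) := by
    simp only [hudef]
    rw [Finset.sum_ite_mem, Finset.univ_inter, Finset.sum_const, hScard]
    simp
  refine ⟨u, Matrix.vecMulVec u u, Matrix.vecMulVec x u, ⟨?_, ?_, ?_, ?_, ?_, ?_, ?_, ?_, ?_, ?_, ?_, ?_, ?_, ?_, ?_, ?_, ?_⟩, ?_⟩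
  · exact hsym
  · exact Matrix.IsSymm.ext fun i j => by simp [Matrix.vecMulVec_apply, mul_comm]
  · exact hsum
  · exact usum
  · exact hxu
  · exact hxnn
  · intro i
    by_cases hi : i ∈ S <;> simp [Matrix.vecMulVec_apply, hudef, hi]
  · exact hrow
  · intro j
    simp only [Matrix.vecMulVec_apply]
    rw [← Finset.sum_mul, hsum, one_mul]
  · intro i
    simp only [Matrix.vecMulVec_apply]
    rw [← Finset.mul_sum, usum, mul_comm]
  · intro i
    simp only [Matrix.vecMulVec_apply]
    rw [← Finset.mul_sum, usum, mul_comm]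
  · intro i j
    simp only [Matrix.vecMulVec_apply]
    by_cases hi : i ∈ S
    · by_cases hj : j ∈ S
      · simp only [hudef, hi, hj, if_true]
        have := hlb i j
        nlinarith
      · have := hxS j hj
        simp only [hudef, hi, hj, if_true, if_false]
        nlinarith [hXnn i j]
    · have hx0 := hxS i hi
      have hX0 := hXz i j hi
      simp [hudef, hi, hx0, hX0]
  · intro i j
    simp only [Matrix.vecMulVec_apply]
    by_cases hi : i ∈ S
    · simp only [hudef, hi, if_true, mul_one]
      linarith [hXcol i j]
    · have := hXz i j hi
      simp only [hudef, hi, if_false, mul_zero]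
      linarith
  · intro i j
    simp only [Matrix.vecMulVec_apply]
    nlinarith [mul_le_mul_of_nonneg_right (hxu i) (hun j)]
  · exact hXnn
  · intro i j; exact mul_nonneg (hxnn i) (hun j)
  · intro i j; exact mul_nonneg (hun i) (hun j)
  · -- PSD of big matrix
    set w : Unit ⊕ (Fin n ⊕ Fin n) → ℝ := Sum.elim (fun _ => 1) (Sum.elim x u) with hwdef
    have key : bigMat x u X (Matrix.vecMulVec u u) (Matrix.vecMulVec x u)
        = Matrix.vecMulVec w w +
          Matrix.fromBlocks 0 0 0
            (Matrix.fromBlocks (X - Matrix.vecMulVec x x) 0 0 0) := by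
      ext i j
      rcases i with _ | i | i <;> rcases j with _ | j | j <;>
        simp [bigMat, Matrix.vecMulVec_apply, Matrix.fromBlocks, hwdef,
          Matrix.add_apply, Matrix.sub_apply] <;> ring
    rw [key]
    exact Matrix.PosSemidef.add (psd_vecMulVec w)
      (psd_block_right (psd_block_left hpsd))


end
end
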